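/- arXiv:2006.00834 — 10 statements merged into one kernel-verified Lean document; each statement's English description precedes it below -/
import Mathlib

section
/- Let A and B be commutative unital C*-algebras and α : A → B a unital *-monomorphism such that (B,α) is an essential extension. Then the map J ↦ α⁻¹(J) is an inclusion-preserving bijection from the set of regular ideals of B onto the set of regular ideals of A, and its inverse is K ↦ (α(K))^⊥⊥, where (α(K))^⊥ := {b ∈ B : b·α(k) = 0 for all k ∈ K}. -/
/-- The annihilator ideal `S^⊥ = {b : ∀ s ∈ S, b·s = 0}` of a subset of a commutative ring. -/
def annIdeal {B : Type*} [CommRing B] (S : Set B) : Ideal B where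
  carrier := {b | ∀ s ∈ S, b * s = 0}
  add_mem' := fun ha hb s hs => by rw [add_mul, ha s hs, hb s hs, add_zero]
  zero_mem' := fun s _ => zero_mul s
  smul_mem' := fun c x hx s hs => by
    simp only [Set.mem_setOf_eq, smul_eq_mul] at *
    rw [mul_assoc, hx s hs, mul_zero]

/-- A regular ideal: a closed ideal equal to its double annihilator. -/
def IsRegularIdeal {B : Type*} [CommRing B] [TopologicalSpace B] (J : Ideal B) : Prop :=
  IsClosed (J : Set B) ∧ annIdeal ((annIdeal (J : Set B) : Ideal B) : Set B) = J

section Aux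
variable {B : Type*} [CommRing B]

lemma mem_annIdeal {S : Set B} {b : B} : b ∈ annIdeal S ↔ ∀ s ∈ S, b * s = 0 := Iff.rfl

lemma subset_annIdeal_annIdeal (S : Set B) :
    S ⊆ ((annIdeal ((annIdeal S : Ideal B) : Set B) : Ideal B) : Set B) :=
  fun s hs t ht => by rw [mul_comm]; exact ht s hs

lemma annIdeal_anti {S T : Set B} (h : S ⊆ T) : annIdeal T ≤ annIdeal S :=
  fun _ hb s hs => hb s (h hs)

lemma annIdeal_triple (S : Set B) :
    annIdeal ((annIdeal ((annIdeal S : Ideal B) : Set B) : Ideal B) : Set B) = annIdeal S :=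
  le_antisymm (annIdeal_anti (subset_annIdeal_annIdeal S))
    (fun b hb => subset_annIdeal_annIdeal ((annIdeal S : Ideal B) : Set B) hb)

end Aux

section Norm
variable {B : Type*} [NormedCommRing B]

lemma annIdeal_isClosed (S : Set B) : IsClosed ((annIdeal S : Ideal B) : Set B) := by
  have : ((annIdeal S : Ideal B) : Set B) = ⋂ s ∈ S, (fun b => b * s) ⁻¹' {0} := by
    ext b
    simp [mem_annIdeal, SetLike.mem_coe]
  rw [this]
  exact isClosed_biInter fun s _ =>
    isClosed_singleton.preimage (continuous_id.mul continuous_const)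

lemma mul_closure_span_eq_zero {S : Set B} {y : B} (h : ∀ s ∈ S, y * s = 0) :
    ∀ z ∈ (Ideal.span S).topologicalClosure, y * z = 0 := by
  have hle : (Ideal.span S).topologicalClosure ≤ annIdeal {y} := by
    apply Submodule.topologicalClosure_minimal
    · rw [Ideal.span_le]
      intro s hs
      intro t ht
      rw [Set.mem_singleton_iff] at ht
      rw [ht, mul_comm]
      exact h s hs
    · exact annIdeal_isClosed {y}
  intro z hz
  have := hle hz y rfl
  rwa [mul_comm] at this

lemma eq_zero_of_sq_eq_zero [StarRing B] [CStarRing B] {x : B} (h : x * x = 0) : x = 0 := by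
  have h1 : (star x * x) * (star x * x) = 0 := by
    have e : (star x * x) * (star x * x) = (star x * star x) * (x * x) := by ring
    rw [e, h, mul_zero]
  have h2 : star (star x * x) = star x * x := by
    rw [star_mul, star_star]
  have h3 : ‖star x * x‖ * ‖star x * x‖ = 0 := by
    rw [← CStarRing.norm_star_mul_self, h2, h1, norm_zero]
  have h4 : star x * x = 0 := norm_eq_zero.mp (mul_self_eq_zero.mp h3)
  have h5 : ‖x‖ * ‖x‖ = 0 := by rw [← CStarRing.norm_star_mul_self, h4, norm_zero]
  exact norm_eq_zero.mp (mul_self_eq_zero.mp h5)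

end Norm

/-- For an essential extension `α : A → B` of commutative unital `C*`-algebras,
`J ↦ α⁻¹(J)` is an inclusion-preserving bijection from the regular ideals of `B` onto the
regular ideals of `A`, with inverse `K ↦ (α(K))^⊥⊥`. -/
theorem regular_ideal_bijection_of_essential
    {A B : Type*}
    [NormedCommRing A] [StarRing A] [CStarRing A] [CompleteSpace A]
    [NormedAlgebra ℂ A] [StarModule ℂ A]
    [NormedCommRing B] [StarRing B] [CStarRing B] [CompleteSpace B]
    [NormedAlgebra ℂ B] [StarModule ℂ B]
    (α : A →⋆ₐ[ℂ] B) (hinj : Function.Injective α)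
    (hEss : ∀ J : Ideal B, IsClosed (J : Set B) →
      ((J : Set B) ∩ Set.range ⇑α = {0}) → J = ⊥) :
    (∀ J : Ideal B, IsRegularIdeal J → IsRegularIdeal (J.comap α)) ∧
    (∀ J₁ J₂ : Ideal B, IsRegularIdeal J₁ → IsRegularIdeal J₂ → J₁ ≤ J₂ →
        J₁.comap α ≤ J₂.comap α) ∧
    (∀ J : Ideal B, IsRegularIdeal J →
        annIdeal ((annIdeal (⇑α '' ((J.comap α : Ideal A) : Set A)) : Ideal B) : Set B) = J) ∧
    (∀ K : Ideal A, IsRegularIdeal K →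
        IsRegularIdeal (annIdeal ((annIdeal (⇑α '' (K : Set A)) : Ideal B) : Set B)) ∧
        (annIdeal ((annIdeal (⇑α '' (K : Set A)) : Ideal B) : Set B)).comap α = K) := by

  -- α is continuous (it is a *-homomorphism between C*-algebras)
  have hcont : Continuous ⇑α := by
    letI : CStarAlgebra A := { ‹NormedCommRing A›.toNormedRing, ‹StarRing A›,
      ‹CompleteSpace A›, ‹CStarRing A›, ‹NormedAlgebra ℂ A›, ‹StarModule ℂ A› with }
    letI : CStarAlgebra B := { ‹NormedCommRing B›.toNormedRing, ‹StarRing B›,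
      ‹CompleteSpace B›, ‹CStarRing B›, ‹NormedAlgebra ℂ B›, ‹StarModule ℂ B› with }
    exact AddMonoidHomClass.continuous_of_bound α 1 (by
      simpa only [one_mul] using fun a => NonUnitalStarAlgHom.norm_apply_le α a)
  -- key use of essentiality
  have hesskill : ∀ S : Set B,
      (∀ x : A, α x ∈ (Ideal.span S).topologicalClosure → ∀ s ∈ S, α x * s = 0) →
      ∀ s ∈ S, s = 0 := by
    intro S hS s hs
    have hLclosed : IsClosed (((Ideal.span S).topologicalClosure : Ideal B) : Set B) :=
      Submodule.isClosed_topologicalClosure _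
    have hLbot : (Ideal.span S).topologicalClosure = ⊥ := by
      apply hEss _ hLclosed
      apply Set.eq_singleton_iff_unique_mem.mpr
      refine ⟨⟨Submodule.zero_mem _, ⟨0, map_zero α⟩⟩, ?_⟩
      rintro z ⟨hzL, x, rfl⟩
      exact eq_zero_of_sq_eq_zero (mul_closure_span_eq_zero (hS x hzL) _ hzL)
    have hmem : s ∈ (Ideal.span S).topologicalClosure :=
      Submodule.le_topologicalClosure _ (Ideal.subset_span hs)
    rw [hLbot] at hmem
    exact Ideal.mem_bot.mp hmem
  -- the annihilator of α(α⁻¹(J)) equals the annihilator of J, for closed ideals J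
  have key3 : ∀ J : Ideal B, IsClosed (J : Set B) →
      annIdeal (⇑α '' ((J.comap α : Ideal A) : Set A)) = annIdeal (J : Set B) := by
    intro J hJc
    refine le_antisymm ?_ (annIdeal_anti ?_)
    · intro b hb
      rw [mem_annIdeal] at hb ⊢
      intro j hj
      refine hesskill {z | ∃ j' ∈ J, z = b * j'} ?_ (b * j) ⟨j, hj, rfl⟩
      intro x hx s hsS
      obtain ⟨j', hj', rfl⟩ := hsS
      have hSJ : Ideal.span {z | ∃ j' ∈ J, z = b * j'} ≤ J := by
        rw [Ideal.span_le]
        rintro _ ⟨j2, hj2, rfl⟩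
        exact J.mul_mem_left b hj2
      have hxJ : α x ∈ J := Submodule.topologicalClosure_minimal _ hSJ hJc hx
      have hbx : b * α x = 0 := hb _ ⟨x, by simpa [Ideal.mem_comap] using hxJ, rfl⟩
      calc α x * (b * j') = (b * α x) * j' := by ring
        _ = 0 := by rw [hbx, zero_mul]
    · rintro _ ⟨k, hk, rfl⟩
      simpa [Ideal.mem_comap] using hk
  have part1 : ∀ J : Ideal B, IsRegularIdeal J → IsRegularIdeal (J.comap α) := by
    intro J hJ
    constructor
    · have he : ((J.comap α : Ideal A) : Set A) = ⇑α ⁻¹' (J : Set B) := rfl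
      rw [he]
      exact hJ.1.preimage hcont
    · refine le_antisymm ?_ (fun a ha => subset_annIdeal_annIdeal _ ha)
      intro a ha
      rw [Ideal.mem_comap, ← hJ.2, mem_annIdeal]
      intro b hb
      have hbann : ∀ j ∈ (J : Set B), b * j = 0 := mem_annIdeal.mp hb
      have hcann : (α a * b) ∈ annIdeal (J : Set B) := by
        rw [mem_annIdeal]
        intro j hj
        calc α a * b * j = α a * (b * j) := by ring
          _ = 0 := by rw [hbann j hj, mul_zero]
      refine hesskill {α a * b} ?_ (α a * b) rfl
      intro x hx s hs
      rw [Set.mem_singleton_iff] at hs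
      subst hs
      have hle : Ideal.span {α a * b} ≤ annIdeal (J : Set B) := by
        rw [Ideal.span_le, Set.singleton_subset_iff]
        exact hcann
      have hx' : α x ∈ annIdeal (J : Set B) :=
        Submodule.topologicalClosure_minimal _ hle (annIdeal_isClosed _) hx
      rw [← key3 J hJ.1] at hx'
      have hxann : x ∈ annIdeal ((J.comap α : Ideal A) : Set A) := by
        rw [mem_annIdeal]
        intro k hk
        have h0 : α x * α k = 0 := mem_annIdeal.mp hx' (α k) ⟨k, hk, rfl⟩
        apply hinj
        rw [map_mul, map_zero]
        exact h0
      have hax : a * x = 0 := mem_annIdeal.mp ha x hxann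
      calc α x * (α a * b) = α (a * x) * b := by rw [map_mul]; ring
        _ = 0 := by rw [hax, map_zero, zero_mul]
  refine ⟨part1, fun J₁ J₂ _ _ h => Ideal.comap_mono h, ?_, ?_⟩
  · intro J hJ
    rw [key3 J hJ.1]
    exact hJ.2
  · intro K hK
    refine ⟨⟨annIdeal_isClosed _, annIdeal_triple _⟩, le_antisymm ?_ ?_⟩
    · intro a ha
      rw [Ideal.mem_comap] at ha
      rw [← hK.2, mem_annIdeal]
      intro x hx
      have hxK : ∀ k ∈ (K : Set A), x * k = 0 := mem_annIdeal.mp hx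
      have hxB : α x ∈ annIdeal (⇑α '' (K : Set A)) := by
        rw [mem_annIdeal]
        rintro _ ⟨k, hk, rfl⟩
        rw [← map_mul, hxK k hk, map_zero]
      have h0 : α a * α x = 0 := mem_annIdeal.mp ha (α x) hxB
      apply hinj
      rw [map_mul, map_zero]
      exact h0
    · intro k hk
      rw [Ideal.mem_comap]
      exact subset_annIdeal_annIdeal _ (⟨k, hk, rfl⟩ : α k ∈ ⇑α '' (K : Set A))
end

section
/- Let (C,D) be an inclusion, v ∈ N(C,D), and d ∈ D. If supp(d̂) ⊆ (fix β_v)°, i.e., every character of D not vanishing at d lies in the interior of fix β_v, then v*dv = v*vd, vd = dv, and vd ∈ D^c (vd commutes with every element of D). -/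
open scoped ComplexOrder
open WeakDual
set_option linter.unusedSectionVars false

namespace RegularInclusion

variable {A : Type*} [NormedRing A] [StarRing A] [CStarRing A] [CompleteSpace A]
  [NormedAlgebra ℂ A] [StarModule ℂ A]

/-- The set of normalizers of the subalgebra `D` in `A`:
`N(A,D) = {v | v* D v ⊆ D and v D v* ⊆ D}`. -/
def normSet (D : StarSubalgebra ℂ A) : Set A :=
  {v | (∀ d ∈ D, star v * d * v ∈ D) ∧ (∀ d ∈ D, v * d * star v ∈ D)}

lemma normSet.star_mul_self_mem {D : StarSubalgebra ℂ A} {v : A} (hv : v ∈ normSet D) :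
    star v * v ∈ D := by simpa using hv.1 1 D.one_mem

lemma normSet.mul_star_self_mem {D : StarSubalgebra ℂ A} {v : A} (hv : v ∈ normSet D) :
    v * star v ∈ D := by simpa using hv.2 1 D.one_mem

/-- `D` is abelian. -/
def IsAbelian (D : StarSubalgebra ℂ A) : Prop := ∀ x ∈ D, ∀ y ∈ D, x * y = y * x

/-- `(A, D)` is an inclusion: `D` is an abelian closed unital `C*`-subalgebra of `A`. -/
def IsInclusion (D : StarSubalgebra ℂ A) : Prop := IsAbelian D ∧ IsClosed (D : Set A)

/-- `(A, D)` is a regular inclusion: an inclusion for which the closed linear span of the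
normalizers is all of `A`. -/
def IsRegularIncl (D : StarSubalgebra ℂ A) : Prop :=
  IsInclusion D ∧ closure (Submodule.span ℂ (normSet D) : Set A) = Set.univ

/-- `D` is a MASA in `A`: `D` is abelian and contains every element commuting with it. -/
def IsMasa (D : StarSubalgebra ℂ A) : Prop :=
  IsAbelian D ∧ ∀ x : A, (∀ d ∈ D, x * d = d * x) → x ∈ D

/-- The relative commutant `D^c` of `D` in `A`. -/
def relComm (D : StarSubalgebra ℂ A) : StarSubalgebra ℂ A :=
  { Subalgebra.centralizer ℂ (D : Set A) with
    star_mem' := by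
      intro x hx d hd
      have h := congrArg star (hx (star d) (star_mem hd))
      simpa [star_mul] using h.symm }

lemma mem_relComm {D : StarSubalgebra ℂ A} {x : A} :
    x ∈ relComm D ↔ ∀ d ∈ D, d * x = x * d := Iff.rfl

/-- `E : A → A` is a conditional expectation onto `D`. -/
structure IsCondExp [PartialOrder A] [StarOrderedRing A] (D : StarSubalgebra ℂ A)
    (E : A →ₗ[ℂ] A) : Prop where
  mem : ∀ x : A, E x ∈ D
  idOn : ∀ d ∈ D, E d = d
  pos : ∀ x : A, 0 ≤ x → 0 ≤ E x
  bimod : ∀ d ∈ D, ∀ d' ∈ D, ∀ x : A, E (d * x * d') = d * E x * d'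

/-- A linear map is faithful if `E (x* x) = 0` implies `x = 0`. -/
def Faithful (E : A →ₗ[ℂ] A) : Prop := ∀ x : A, E (star x * x) = 0 → x = 0

/-- `(A,D)` is a Cartan inclusion: a regular MASA inclusion admitting a faithful conditional
expectation onto `D`. -/
def IsCartanIncl [PartialOrder A] [StarOrderedRing A] (D : StarSubalgebra ℂ A) : Prop :=
  IsRegularIncl D ∧ IsMasa D ∧ ∃ E : A →ₗ[ℂ] A, IsCondExp D E ∧ Faithful E

/-- The fixed-point set of the partial homeomorphism `β_v` of the character space of `D`:
those characters `σ` with `σ(v*v) > 0` and `σ(v* h v) = σ(h)·σ(v*v)` for all `h ∈ D`. -/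
def fixBeta (D : StarSubalgebra ℂ A) {v : A} (hv : v ∈ normSet D) :
    Set (characterSpace ℂ ↥D) :=
  {σ | 0 < σ (⟨star v * v, normSet.star_mul_self_mem hv⟩ : D) ∧
    ∀ h : D, σ (⟨star v * (h : A) * v, hv.1 (h : A) h.2⟩ : D)
      = σ h * σ (⟨star v * v, normSet.star_mul_self_mem hv⟩ : D)}

/-- A subset `S` of a topological algebra `B` is essential in `B` if the only closed two-sided
ideal of `B` meeting `S` trivially is the zero ideal. -/
def EssentialInSet (B : Type*) [NonUnitalNonAssocRing B] [TopologicalSpace B]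
    (S : Set B) : Prop :=
  ∀ J : TwoSidedIdeal B, IsClosed (J : Set B) → (J : Set B) ∩ S = {0} → J = ⊥

section Two
variable {B : Type*} [NormedRing B] [StarRing B] [CStarRing B] [CompleteSpace B]
  [NormedAlgebra ℂ B] [StarModule ℂ B]

/-- A `*`-homomorphism between inclusions is regular if it maps `D` into `D₁` and
normalizers to normalizers. -/
def IsRegularHom (D : StarSubalgebra ℂ A) (D₁ : StarSubalgebra ℂ B) (α : A →⋆ₐ[ℂ] B) : Prop :=
  (∀ d ∈ D, α d ∈ D₁) ∧ (∀ v ∈ normSet D, α v ∈ normSet D₁)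

/-- `(B, D₁, α)` is a package for the regular inclusion `(A, D)`, witnessed by the faithful
conditional expectation `E₁`: `(B,D₁)` is a regular inclusion, `α` is an injective regular
`*`-homomorphism, `B` is generated as a `C*`-algebra by `α(A) ∪ E₁(α(A))` and `D₁` is
generated by `E₁(α(A))`. -/
def IsPackage [PartialOrder B] [StarOrderedRing B] (D : StarSubalgebra ℂ A)
    (D₁ : StarSubalgebra ℂ B) (α : A →⋆ₐ[ℂ] B) (E₁ : B →ₗ[ℂ] B) : Prop :=
  IsRegularIncl D₁ ∧ Function.Injective α ∧ IsRegularHom D D₁ α ∧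
    IsCondExp D₁ E₁ ∧ Faithful E₁ ∧
    (StarAlgebra.adjoin ℂ (Set.range ⇑α ∪ ⇑E₁ '' Set.range ⇑α)).topologicalClosure = ⊤ ∧
    (StarAlgebra.adjoin ℂ (⇑E₁ '' Set.range ⇑α)).topologicalClosure = D₁

/-- `(D₁, α|_D)` is an essential extension of `D`. -/
def EssentialExtIn (D : StarSubalgebra ℂ A) (D₁ : StarSubalgebra ℂ B) (α : A →⋆ₐ[ℂ] B) : Prop :=
  EssentialInSet ↥D₁ {x : ↥D₁ | ∃ d ∈ D, α d = (x : B)}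

/-- `(B, D₁, α)` is a Cartan envelope of `(A, D)`, witnessed by the faithful conditional
expectation `E₁`: a package for which `(B,D₁)` is moreover a Cartan inclusion (i.e. `D₁` is
a MASA in `B`) and `(D₁, α|_D)` is an essential extension of `D`. -/
def IsCartanEnvelope [PartialOrder B] [StarOrderedRing B] (D : StarSubalgebra ℂ A)
    (D₁ : StarSubalgebra ℂ B) (α : A →⋆ₐ[ℂ] B) (E₁ : B →ₗ[ℂ] B) : Prop :=
  IsPackage D D₁ α E₁ ∧ IsMasa D₁ ∧ EssentialExtIn D D₁ α

end Two

/-- The set of normalizers of `Dα` relative to the subalgebra `Cα`. -/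
def normSetRel (Cα Dα : StarSubalgebra ℂ A) : Set A :=
  {v | v ∈ Cα ∧ (∀ d ∈ Dα, star v * d * v ∈ Dα) ∧ (∀ d ∈ Dα, v * d * star v ∈ Dα)}

/-- `φ` is an eigenfunctional for `(A,D)` with range character `r` and source character `s`. -/
def IsEigen (D : StarSubalgebra ℂ A) (φ : A →L[ℂ] ℂ) (r s : ↥D →ₐ[ℂ] ℂ) : Prop :=
  φ ≠ 0 ∧ ∀ (d₁ d₂ : D) (x : A), φ ((d₁ : A) * x * (d₂ : A)) = r d₁ * φ x * s d₂

/-- `f` is a state on `A`. -/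
def IsState (f : A →ₗ[ℂ] ℂ) : Prop := f 1 = 1 ∧ ∀ x : A, 0 ≤ f (star x * x)

/-- `f ∈ Mod(A,D)`: a state whose restriction to `D` is multiplicative (hence a character). -/
def InMod (D : StarSubalgebra ℂ A) (f : A →ₗ[ℂ] ℂ) : Prop :=
  IsState f ∧ ∀ d₁ d₂ : D, f ((d₁ : A) * (d₂ : A)) = f (d₁ : A) * f (d₂ : A)

/-- `f` is a compatible state: a state with `|f(v)|² ∈ {0, f(v*v)}` for every normalizer `v`. -/
def IsCompatState (D : StarSubalgebra ℂ A) (f : A →ₗ[ℂ] ℂ) : Prop :=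
  IsState f ∧ ∀ v ∈ normSet D, f v = 0 ∨ (Complex.normSq (f v) : ℂ) = f (star v * v)

/-- `φ` is a compatible eigenfunctional: `|φ(v)|² ∈ {0, s(φ)(v*v)}` for every normalizer `v`. -/
def IsCompatEigen (D : StarSubalgebra ℂ A) (φ : A →L[ℂ] ℂ) (r s : ↥D →ₐ[ℂ] ℂ) : Prop :=
  IsEigen D φ r s ∧ ∀ v, ∀ hv : v ∈ normSet D,
    φ v = 0 ∨ (Complex.normSq (φ v) : ℂ)
      = s (⟨star v * v, normSet.star_mul_self_mem hv⟩ : D)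

/-- The eigenfunctional `[v,f] : x ↦ f(v* x) / f(v* v)^{1/2}`. -/
noncomputable def evf (f : A →ₗ[ℂ] ℂ) (v : A) (x : A) : ℂ :=
  f (star v * x) / (Real.sqrt (f (star v * v)).re : ℂ)

/-- A bundled unital `C*`-algebra (with its canonical partial order). -/
structure CSA where
  carrier : Type
  [nr : NormedRing carrier]
  [sr : StarRing carrier]
  [cs : CStarRing carrier]
  [cp : CompleteSpace carrier]
  [na : NormedAlgebra ℂ carrier]
  [sm : StarModule ℂ carrier]
  [po : PartialOrder carrier]
  [sor : StarOrderedRing carrier]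

attribute [instance] CSA.nr CSA.sr CSA.cs CSA.cp CSA.na CSA.sm CSA.po CSA.sor

end RegularInclusion

namespace RegularInclusion

variable {A : Type*} [NormedRing A] [StarRing A] [CStarRing A] [CompleteSpace A]
  [NormedAlgebra ℂ A] [StarModule ℂ A]


section Helpers

lemma zero_of_char' {B : Type*} [CommCStarAlgebra B] [Nontrivial B] (x : B)
    (h : ∀ σ : characterSpace ℂ B, σ x = 0) : x = 0 := by
  have hsp : spectrum ℂ x = {0} := by
    apply Set.eq_of_subset_of_subset
    · intro z hz
      obtain ⟨f, hf⟩ := WeakDual.CharacterSpace.mem_spectrum_iff_exists.mp hz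
      simp [h f] at hf; simp [← hf]
    · intro z hz
      simp only [Set.mem_singleton_iff] at hz
      obtain ⟨z', hz'⟩ := spectrum.nonempty x
      obtain ⟨f, hf⟩ := WeakDual.CharacterSpace.mem_spectrum_iff_exists.mp hz'
      have hz0 : z' = 0 := by rw [← hf, h f]
      rw [hz]; rwa [hz0] at hz'
  have hr := IsStarNormal.spectralRadius_eq_nnnorm x
  rw [spectralRadius, hsp] at hr
  simp at hr
  rw [eq_comm, nnnorm_eq_zero] at hr
  exact hr

lemma char_star' (D : StarSubalgebra ℂ A) (hcl : IsClosed (D : Set A))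
    (σ : characterSpace ℂ ↥D) (x : ↥D) : σ (star x) = (starRingEnd ℂ) (σ x) := by
  letI : CompleteSpace ↥D := hcl.completeSpace_coe
  letI : CStarAlgebra ↥D :=
    { toNormedRing := inferInstance, toStarRing := inferInstance,
      toCompleteSpace := inferInstance, toCStarRing := inferInstance,
      toNormedAlgebra := inferInstance, toStarModule := inferInstance }
  exact map_star σ x

/-- The conjugation map `h ↦ v* h v` on `D`, as a continuous linear map. -/
noncomputable def conjT (D : StarSubalgebra ℂ A) (v : A) (hv : v ∈ normSet D) :
    ↥D →L[ℂ] ↥D :=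
  LinearMap.mkContinuous
    { toFun := fun h => ⟨star v * (h : A) * v, hv.1 (h : A) h.2⟩
      map_add' := fun h₁ h₂ => Subtype.ext <| by
        show star v * ((h₁ : A) + (h₂ : A)) * v
            = star v * (h₁ : A) * v + star v * (h₂ : A) * v
        simp [mul_add, add_mul]
      map_smul' := fun c h => Subtype.ext <| by
        show star v * (c • (h : A)) * v = c • (star v * (h : A) * v)
        simp [mul_smul_comm, smul_mul_assoc] }
    (‖star v‖ * ‖v‖)
    (fun h => by
      show ‖star v * (h : A) * v‖ ≤ ‖star v‖ * ‖v‖ * ‖(h : A)‖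
      calc ‖star v * (h : A) * v‖ ≤ ‖star v * (h : A)‖ * ‖v‖ := norm_mul_le _ _
        _ ≤ ‖star v‖ * ‖(h : A)‖ * ‖v‖ := by
            gcongr
            exact norm_mul_le _ _
        _ = ‖star v‖ * ‖v‖ * ‖(h : A)‖ := by ring)

lemma char_conj (D : StarSubalgebra ℂ A) (hD : IsInclusion D)
    (v : A) (hv : v ∈ normSet D) (d : A) (hd : d ∈ D)
    (hsupp : ∀ σ : characterSpace ℂ ↥D, σ (⟨d, hd⟩ : D) ≠ 0 →
      σ ∈ interior (fixBeta D hv)) (σ : characterSpace ℂ ↥D) :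
    σ (conjT D v hv ⟨d, hd⟩)
      = σ (⟨d, hd⟩ : D) * σ (⟨star v * v, normSet.star_mul_self_mem hv⟩ : D) := by
  letI : CompleteSpace ↥D := hD.2.completeSpace_coe
  set T := conjT D v hv with hT
  set a : ↥D := (⟨star v * v, normSet.star_mul_self_mem hv⟩ : ↥D) with ha2
  set e : ↥D := (⟨v * star v, normSet.mul_star_self_mem hv⟩ : ↥D) with he2
  set dd : ↥D := (⟨d, hd⟩ : ↥D) with hdd
  have hcomm : ∀ x y : ↥D, x * y = y * x := fun x y => Subtype.ext (hD.1 _ x.2 _ y.2)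
  have hF1 : ∀ h : ↥D, T h * a = T (h * e) := by
    intro h
    apply Subtype.ext
    show (star v * (h : A) * v) * (star v * v) = star v * ((h : A) * (v * star v)) * v
    simp [mul_assoc]
  have hF2 : ∀ x y : ↥D, T x * T y = T (x * y) * a := by
    intro x y
    have h1 : T x * T y = T (x * e * y) := by
      apply Subtype.ext
      show (star v * (x : A) * v) * (star v * (y : A) * v)
          = star v * ((x : A) * (v * star v) * (y : A)) * v
      simp [mul_assoc]
    have h2 : x * e * y = x * y * e := by
      rw [mul_assoc, hcomm e y, ← mul_assoc]
    rw [h1, h2, ← hF1]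
  have hF4 : T 1 = a := by
    apply Subtype.ext
    show star v * (1 : A) * v = star v * v
    rw [mul_one]
  by_cases hσd : σ dd = 0
  · by_cases hσa : σ a = 0
    · have hF5 : star (T dd) = T (star dd) := by
        apply Subtype.ext
        show star (star v * d * v) = star v * star d * v
        simp [star_mul, mul_assoc]
      have h1 : star (T dd) * T dd = T (star dd * dd) * a := by rw [hF5, hF2]
      have h2 := congrArg σ h1
      rw [map_mul, map_mul, hσa, mul_zero] at h2
      rw [char_star' D hD.2 σ (T dd)] at h2
      have h5 : Complex.normSq (σ (T dd)) = 0 := by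
        have h6 : σ (T dd) * (starRingEnd ℂ) (σ (T dd)) = 0 := by rw [mul_comm]; exact h2
        rw [Complex.mul_conj] at h6
        exact_mod_cast h6
      have h3 : σ (T dd) = 0 := Complex.normSq_eq_zero.mp h5
      rw [h3, hσd, zero_mul]
    · set c : ℂ := (σ a)⁻¹ with hc
      have hca : c * σ a = 1 := inv_mul_cancel₀ hσa
      set φ : WeakDual ℂ ↥D := c • ((CharacterSpace.toCLM σ).comp T) with hφ
      have hφx : ∀ x : ↥D, φ x = c * σ (T x) := fun x => rfl
      have hmul : ∀ x y : ↥D, φ (x * y) = φ x * φ y := by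
        intro x y
        rw [hφx, hφx, hφx]
        have h1 : σ (T x) * σ (T y) = σ (T (x * y)) * σ a := by
          rw [← map_mul, hF2, map_mul]
        have h2 : c * σ (T x) * (c * σ (T y)) = c * c * (σ (T (x * y)) * σ a) := by
          rw [← h1]; ring
        rw [h2]
        calc c * σ (T (x * y)) = (c * σ a) * (c * σ (T (x * y))) := by rw [hca, one_mul]
          _ = c * c * (σ (T (x * y)) * σ a) := by ring
      have hφne : φ ≠ 0 := by
        intro h0
        have h1 : φ 1 = 0 := by rw [h0]; rfl
        rw [hφx, hF4] at h1
        exact one_ne_zero (by rw [← hca]; exact h1)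
      set τ : characterSpace ℂ ↥D := ⟨φ, hφne, hmul⟩ with hτ
      have hτx : ∀ x : ↥D, τ x = c * σ (T x) := fun x => rfl
      by_cases hτd : τ dd = 0
      · have h1 : σ (T dd) = 0 := by
          have h2 : c * σ (T dd) = 0 := hτd
          rcases mul_eq_zero.mp h2 with h | h
          · exact absurd h (inv_ne_zero hσa)
          · exact h
        rw [h1, hσd, zero_mul]
      · exfalso
        have hfix : τ ∈ fixBeta D hv := interior_subset (hsupp τ hτd)
        have hτa_ne : τ a ≠ 0 := ne_of_gt hfix.1
        have key : ∀ h' : ↥D, τ a * τ h' = σ a * σ h' := by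
          intro h'
          set Sh : ↥D := (⟨v * (h' : A) * star v, hv.2 (h' : A) h'.2⟩ : ↥D) with hS
          have hF3 : T Sh = a * h' * a := by
            apply Subtype.ext
            show star v * (v * (h' : A) * star v) * v
                = (star v * v) * (h' : A) * (star v * v)
            simp [mul_assoc]
          have h1 : τ (T Sh) = τ Sh * τ a := hfix.2 Sh
          have h2 : τ (T Sh) = τ a * τ h' * τ a := by rw [hF3, map_mul, map_mul]
          have h3 : τ Sh * τ a = τ a * τ h' * τ a := by rw [← h1, h2]
          have h4 : τ Sh = τ a * τ h' := mul_right_cancel₀ hτa_ne h3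
          have h5 : τ Sh = c * σ (T Sh) := hτx Sh
          rw [hF3, map_mul, map_mul] at h5
          rw [h4] at h5
          calc τ a * τ h' = c * (σ a * σ h' * σ a) := h5
            _ = (c * σ a) * (σ a * σ h') := by ring
            _ = σ a * σ h' := by rw [hca, one_mul]
        have hτa_eq : τ a = σ a := by
          have h1 := key 1
          rw [map_one, map_one, mul_one, mul_one] at h1
          exact h1
        have hτσ : τ dd = σ dd := by
          have h1 := key dd
          rw [hτa_eq] at h1
          exact mul_left_cancel₀ hσa h1
        rw [hτσ, hσd] at hτd
        exact hτd rfl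
  · have hfix : σ ∈ fixBeta D hv := interior_subset (hsupp σ hσd)
    exact hfix.2 dd

lemma conj_eq (D : StarSubalgebra ℂ A) (hD : IsInclusion D)
    (v : A) (hv : v ∈ normSet D) (d : A) (hd : d ∈ D)
    (hsupp : ∀ σ : characterSpace ℂ ↥D, σ (⟨d, hd⟩ : D) ≠ 0 →
      σ ∈ interior (fixBeta D hv)) :
    star v * d * v = star v * v * d := by
  rcases subsingleton_or_nontrivial A with hs | hnt
  · exact Subsingleton.elim _ _
  have hchar : ∀ σ : characterSpace ℂ ↥D,
      σ ((conjT D v hv ⟨d, hd⟩ : ↥D)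
        - (⟨d, hd⟩ : ↥D) * ⟨star v * v, normSet.star_mul_self_mem hv⟩) = 0 := by
    intro σ
    rw [map_sub, map_mul, char_conj D hD v hv d hd hsupp σ, sub_self]
  letI : CompleteSpace ↥D := hD.2.completeSpace_coe
  letI : CStarAlgebra ↥D :=
    { toNormedRing := inferInstance, toStarRing := inferInstance,
      toCompleteSpace := inferInstance, toCStarRing := inferInstance,
      toNormedAlgebra := inferInstance, toStarModule := inferInstance }
  letI : CommCStarAlgebra ↥D :=
    { mul_comm := fun x y => Subtype.ext (hD.1 _ x.2 _ y.2) }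
  haveI : Nontrivial ↥D := nontrivial_of_ne 1 0 (fun hh => one_ne_zero (congrArg Subtype.val hh))
  have hx := zero_of_char' _ (fun σ => hchar σ)
  have hx3 : (star v * d * v) - d * (star v * v) = 0 := congrArg Subtype.val hx
  have hx4 : star v * d * v = d * (star v * v) := by rwa [sub_eq_zero] at hx3
  rw [hx4]
  exact hD.1 d hd (star v * v) (normSet.star_mul_self_mem hv)

lemma comm_of_supp (D : StarSubalgebra ℂ A) (hD : IsInclusion D)
    (v : A) (hv : v ∈ normSet D) (d : A) (hd : d ∈ D)
    (hsupp : ∀ σ : characterSpace ℂ ↥D, σ (⟨d, hd⟩ : D) ≠ 0 →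
      σ ∈ interior (fixBeta D hv)) :
    v * d = d * v := by
  have hds : ∀ σ : characterSpace ℂ ↥D, σ (⟨star d, star_mem hd⟩ : D) ≠ 0 →
      σ ∈ interior (fixBeta D hv) := by
    intro σ h
    apply hsupp σ
    intro h0
    apply h
    have h1 : σ (⟨star d, star_mem hd⟩ : ↥D) = (starRingEnd ℂ) (σ (⟨d, hd⟩ : ↥D)) :=
      char_star' D hD.2 σ ⟨d, hd⟩
    rw [h1, h0, map_zero]
  have hds2 : ∀ σ : characterSpace ℂ ↥D,
      σ (⟨star d * d, mul_mem (star_mem hd) hd⟩ : D) ≠ 0 →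
      σ ∈ interior (fixBeta D hv) := by
    intro σ h
    apply hsupp σ
    intro h0
    apply h
    have h1 : σ (⟨star d * d, mul_mem (star_mem hd) hd⟩ : ↥D)
        = σ (⟨star d, star_mem hd⟩ : ↥D) * σ (⟨d, hd⟩ : ↥D) := map_mul σ ⟨star d, star_mem hd⟩ ⟨d, hd⟩
    rw [h1, h0, mul_zero]
  have e1 := conj_eq D hD v hv d hd hsupp
  have e2 := conj_eq D hD v hv (star d) (star_mem hd) hds
  have e3 := conj_eq D hD v hv (star d * d) (mul_mem (star_mem hd) hd) hds2
  have key : star (v * d - d * v) * (v * d - d * v) = 0 := by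
    have expand : star (v * d - d * v) * (v * d - d * v)
        = star d * (star v * v * d - star v * d * v)
          - (star v * star d * v - star v * v * star d) * d
          - (star v * v * (star d * d) - star v * (star d * d) * v) := by
      rw [star_sub, star_mul, star_mul]
      noncomm_ring
    rw [expand, e1, e2, e3]
    simp
  have hz : v * d - d * v = 0 := (CStarRing.star_mul_self_eq_zero_iff _).mp key
  rwa [sub_eq_zero] at hz

end Helpers

/-- If every character of `D` not vanishing at `d` lies in the interior of
`fix β_v`, then `v*dv = v*vd`, `vd = dv`, and `vd ∈ D^c`. -/
theorem stmt3 (D : StarSubalgebra ℂ A) (hD : IsInclusion D)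
    (v : A) (hv : v ∈ normSet D) (d : A) (hd : d ∈ D)
    (hsupp : ∀ σ : characterSpace ℂ ↥D, σ (⟨d, hd⟩ : D) ≠ 0 →
      σ ∈ interior (fixBeta D hv)) :
    star v * d * v = star v * v * d ∧ v * d = d * v ∧ ∀ x ∈ D, v * d * x = x * (v * d) := by
  refine ⟨conj_eq D hD v hv d hd hsupp, comm_of_supp D hD v hv d hd hsupp, ?_⟩
  intro x hx
  have hsupp' : ∀ σ : characterSpace ℂ ↥D, σ (⟨d * x, mul_mem hd hx⟩ : D) ≠ 0 →
      σ ∈ interior (fixBeta D hv) := by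
    intro σ h
    apply hsupp σ
    intro h0
    apply h
    have h1 : σ (⟨d * x, mul_mem hd hx⟩ : ↥D)
        = σ (⟨d, hd⟩ : ↥D) * σ (⟨x, hx⟩ : ↥D) := map_mul σ ⟨d, hd⟩ ⟨x, hx⟩
    rw [h1, h0, zero_mul]
  have h2 := comm_of_supp D hD v hv (d * x) (mul_mem hd hx) hsupp'
  have h3 := comm_of_supp D hD v hv d hd hsupp
  calc v * d * x = v * (d * x) := by rw [mul_assoc]
    _ = (d * x) * v := h2
    _ = (x * d) * v := by rw [hD.1 d hd x hx]
    _ = x * (d * v) := by rw [mul_assoc]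
    _ = x * (v * d) := by rw [← h3]

end RegularInclusion
end

section
/- Let (C,D) be an inclusion and v ∈ N(C,D). Suppose d ∈ D lies in the closure of {v*v·h : h ∈ D} and satisfies vd = dv ∈ D^c. Then every character σ of D with σ(d) ≠ 0 belongs to fix β_v; that is, σ(v*v) > 0 and σ(v*hv) = σ(h)·σ(v*v) for all h ∈ D. Consequently supp(d̂) ⊆ (fix β_v)°. -/
open scoped ComplexOrder
open WeakDual
set_option linter.unusedSectionVars false

namespace RegularInclusion

variable {A : Type*} [NormedRing A] [StarRing A] [CStarRing A] [CompleteSpace A]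
  [NormedAlgebra ℂ A] [StarModule ℂ A]

/-- If `d ∈ D` lies in the closure of `v*v·D` and satisfies `vd = dv ∈ D^c`,
then every character `σ` of `D` with `σ(d) ≠ 0` belongs to `fix β_v`; consequently
`supp(d̂) ⊆ (fix β_v)°`. -/
theorem stmt4 (D : StarSubalgebra ℂ A) (hD : IsInclusion D)
    (v : A) (hv : v ∈ normSet D) (d : A) (hd : d ∈ D)
    (hclos : d ∈ closure ((fun h : A => star v * v * h) '' (D : Set A)))
    (hcomm : v * d = d * v) (hdc : v * d ∈ relComm D) :
    (∀ σ : characterSpace ℂ ↥D, σ (⟨d, hd⟩ : D) ≠ 0 → σ ∈ fixBeta D hv) ∧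
    {σ : characterSpace ℂ ↥D | σ (⟨d, hd⟩ : D) ≠ 0} ⊆ interior (fixBeta D hv) := by
  classical
  letI : CStarAlgebra A :=
    { ‹NormedRing A›, ‹StarRing A›, ‹CompleteSpace A›, ‹CStarRing A›,
      ‹NormedAlgebra ℂ A›, ‹StarModule ℂ A› with }
  set w : D := (⟨star v * v, normSet.star_mul_self_mem hv⟩ : D) with hw
  have key : ∀ σ : characterSpace ℂ ↥D, σ (⟨d, hd⟩ : D) ≠ 0 → σ ∈ fixBeta D hv := by
    intro σ hσ
    -- `σ w ≠ 0`, using the closure hypothesis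
    have hw0 : σ w ≠ 0 := by
      intro h0
      apply hσ
      obtain ⟨u, hu, hlim⟩ := mem_closure_iff_seq_limit.mp hclos
      choose x hx heq using fun n => hu n
      set g : ℕ → D := fun n => w * ⟨x n, hx n⟩ with hg
      have hgval : ∀ n, ((g n : A)) = u n := fun n => heq n
      have hgd : Filter.Tendsto g Filter.atTop (nhds (⟨d, hd⟩ : D)) := by
        rw [tendsto_subtype_rng]
        simpa [hgval] using hlim
      have h1 : Filter.Tendsto (fun n => σ (g n)) Filter.atTop (nhds (σ (⟨d, hd⟩ : D))) :=
        ((map_continuous σ).tendsto _).comp hgd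
      have h2 : ∀ n, σ (g n) = 0 := by
        intro n
        rw [hg]
        simp [map_mul, h0]
      rw [funext h2] at h1
      exact tendsto_nhds_unique h1 tendsto_const_nhds
    -- `σ w` is a nonnegative real
    have hmem : σ w ∈ spectrum ℂ w := CharacterSpace.apply_mem_spectrum σ w
    have hspec : spectrum ℂ w = spectrum ℂ ((w : A)) :=
      StarSubalgebra.spectrum_eq D (hS := hD.2) (a := w)
    rw [hspec] at hmem
    have hsa : IsSelfAdjoint ((w : A)) := by
      simpa [hw] using IsSelfAdjoint.star_mul_self v
    have hre : σ w = ((σ w).re : ℂ) := hsa.mem_spectrum_eq_re hmem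
    have hre_mem : (σ w).re ∈ spectrum ℝ ((w : A)) := by
      have : algebraMap ℝ ℂ (σ w).re ∈ spectrum ℂ ((w : A)) := by
        rw [Complex.coe_algebraMap] at *
        rwa [← hre]
      exact spectrum.of_algebraMap_mem ℂ this
    have hnonneg : 0 ≤ (σ w).re := by
      have := spectrum_star_mul_self_nonneg (A := A) (b := v)
      exact this _ (by simpa [hw] using hre_mem)
    have hpos : 0 < σ w := by
      rw [hre]
      rw [Complex.zero_lt_real]
      rcases hnonneg.lt_or_eq with h | h
      · exact h
      · exfalso; apply hw0; rw [hre, ← h]; simp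
    refine ⟨hpos, fun h => ?_⟩
    -- multiplicativity from the commutation hypothesis
    have hcommA : (h : A) * (v * d) = (v * d) * (h : A) := hdc (h : A) h.2
    have hAeq : star v * (h : A) * v * d = star v * v * d * (h : A) := by
      calc star v * (h : A) * v * d = star v * ((h : A) * (v * d)) := by
            simp only [mul_assoc]
        _ = star v * ((v * d) * (h : A)) := by rw [hcommA]
        _ = star v * v * d * (h : A) := by simp only [mul_assoc]
    have hDeq : (⟨star v * (h : A) * v, hv.1 (h : A) h.2⟩ : D) * ⟨d, hd⟩
        = w * ⟨d, hd⟩ * h := by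
      ext
      simpa using hAeq
    have := congrArg σ hDeq
    rw [map_mul, map_mul, map_mul] at this
    have hcancel : σ (⟨star v * (h : A) * v, hv.1 (h : A) h.2⟩ : D) = σ w * σ h :=
      mul_right_cancel₀ hσ (by rw [this]; ring)
    rw [hcancel]; ring
  refine ⟨key, fun σ hσ => ?_⟩
  have hopen : IsOpen {σ : characterSpace ℂ ↥D | σ (⟨d, hd⟩ : D) ≠ 0} := by
    have hc : Continuous fun σ : characterSpace ℂ ↥D => σ (⟨d, hd⟩ : D) := by
      exact (WeakDual.eval_continuous (⟨d, hd⟩ : D)).comp continuous_subtype_val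
    exact isOpen_compl_singleton.preimage hc
  exact interior_maximal key hopen hσ

end RegularInclusion
end

section
/- Let (C,D) be an inclusion and v ∈ N(C,D). Suppose d ∈ D satisfies: (i) vd = dv ∈ D^c; (ii) for every h ∈ D with h·(v*v) = 0 one has h·d = 0; and (iii) d·e = 0 for every e ∈ D lying in the closure of {v*v·h : h ∈ D} with ve = ev ∈ D^c. Then d = 0. (Equivalently, with K₀ := {d ∈ D : vd = dv ∈ D^c and h·v*v = 0 ⟹ h·d = 0 for all h ∈ D} the fixed point ideal for v, and J := K₀ ∩ closure(v*v·D), one has K₀ ∩ J^⊥ = (0).) -/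
open scoped ComplexOrder
open WeakDual
set_option linter.unusedSectionVars false

namespace RegularInclusion

variable {A : Type*} [NormedRing A] [StarRing A] [CStarRing A] [CompleteSpace A]
  [NormedAlgebra ℂ A] [StarModule ℂ A]

/-- If `d ∈ D` satisfies (i) `vd = dv ∈ D^c`, (ii) `h·(v*v) = 0 ⟹ h·d = 0`
for all `h ∈ D`, and (iii) `d·e = 0` for every `e ∈ D` in the closure of `v*v·D` with
`ve = ev ∈ D^c`, then `d = 0`.  (I.e. `K₀ ∩ (K₀ ∩ closure(v*v D))^⊥ = (0)` where `K₀` is the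
fixed point ideal for `v`.) -/
theorem stmt5 (D : StarSubalgebra ℂ A) (hD : IsInclusion D)
    (v : A) (hv : v ∈ normSet D) (d : A) (hd : d ∈ D)
    (h1 : v * d = d * v) (h1' : v * d ∈ relComm D)
    (h2 : ∀ h ∈ D, h * (star v * v) = 0 → h * d = 0)
    (h3 : ∀ e ∈ D, e ∈ closure ((fun h : A => star v * v * h) '' (D : Set A)) →
        v * e = e * v → v * e ∈ relComm D → d * e = 0) :
    d = 0 := by
  obtain ⟨hcom, -⟩ := hD
  set w : A := star v * v with hw_def
  have hw : w ∈ D := normSet.star_mul_self_mem hv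
  have hd' : star d ∈ D := star_mem hd
  -- the element e = w * d
  have he : w * d ∈ D := D.mul_mem hw hd
  have hwvd : w * (v * d) = (v * d) * w := (mem_relComm.mp h1') w hw
  have hveq : v * (w * d) = w * (v * d) := by
    calc v * (w * d) = v * (d * w) := by rw [hcom w hw d hd]
      _ = (v * d) * w := by rw [← mul_assoc]
      _ = w * (v * d) := hwvd.symm
  have hev : v * (w * d) = (w * d) * v := by
    rw [hveq, h1, ← mul_assoc]
  have hwc : w ∈ relComm D := mem_relComm.mpr (fun x hx => hcom x hx w hw)
  have hvec : v * (w * d) ∈ relComm D := by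
    rw [hveq]; exact mul_mem hwc h1'
  have hcl : w * d ∈ closure ((fun h : A => star v * v * h) '' (D : Set A)) :=
    subset_closure ⟨d, hd, rfl⟩
  have hde : d * (w * d) = 0 := h3 (w * d) he hcl hev hvec
  -- p := star d * d
  set p : A := star d * d with hp_def
  have hpD : p ∈ D := D.mul_mem hd' hd
  have hppD : p * p ∈ D := D.mul_mem hpD hpD
  -- (p * p) * w = 0
  have hppw : (p * p) * w = 0 := by
    have key : (p * p) * w = star d * (d * (w * d)) * star d := by
      calc (p * p) * w = p * p * w := rfl
        _ = p * (w * (p)) := by rw [mul_assoc, hcom p hpD w hw]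
        _ = p * (w * (star d * d)) := rfl
        _ = p * (w * (d * star d)) := by rw [hcom (star d) hd' d hd]
        _ = star d * (d * (w * (d * star d))) := by rw [hp_def, mul_assoc]
        _ = star d * (d * (w * d)) * star d := by
            simp only [mul_assoc]
    rw [key, hde, mul_zero, zero_mul]
  have hppd : (p * p) * d = 0 := h2 (p * p) hppD hppw
  -- p ^ 3 = 0
  have hp3 : p * p * p = 0 := by
    have : star d * ((p * p) * d) = p * p * p := by
      calc star d * ((p * p) * d) = (star d * (p * p)) * d := by
            simp only [mul_assoc]
        _ = ((p * p) * star d) * d := by rw [hcom (star d) hd' (p * p) hppD]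
        _ = (p * p) * (star d * d) := by rw [mul_assoc]
        _ = p * p * p := rfl
    rw [← this, hppd, mul_zero]
  -- norm argument: p is self-adjoint, p^4 = 0 ⟹ ‖p‖ = 0
  have hpstar : star p = p := by simp [hp_def, star_mul]
  have hp4 : (p * p) * (p * p) = 0 := by
    rw [← mul_assoc, hp3, zero_mul]
  have hnp : ‖p‖ = 0 := by
    have h1n : ‖(p * p) * (p * p)‖ = ‖p * p‖ ^ 2 := by
      have := CStarRing.norm_star_mul_self (x := p * p)
      simpa [star_mul, hpstar, sq] using this
    have h2n : ‖p * p‖ = ‖p‖ ^ 2 := by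
      have := CStarRing.norm_star_mul_self (x := p)
      simpa [hpstar, sq] using this
    have : ‖p‖ ^ 4 = 0 := by
      have : (‖p‖ ^ 2) ^ 2 = 0 := by rw [← h2n, ← h1n, hp4, norm_zero]
      calc ‖p‖ ^ 4 = (‖p‖ ^ 2) ^ 2 := by ring
        _ = 0 := this
    exact pow_eq_zero_iff (by norm_num) |>.mp this
  have hp0 : p = 0 := norm_eq_zero.mp hnp
  have : ‖d‖ ^ 2 = 0 := by
    have := CStarRing.norm_star_mul_self (x := d)
    rw [← hp_def, hp0, norm_zero] at this
    rw [sq, this]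
  have : ‖d‖ = 0 := pow_eq_zero_iff (by norm_num) |>.mp this
  exact norm_eq_zero.mp this

end RegularInclusion
end

section
/- Let (C,D) be an inclusion admitting a conditional expectation E : C → D. Then for every v ∈ N(C,D), the element v*·E(v) belongs to the relative commutant D^c, i.e., v*E(v) commutes with every element of D. -/
open scoped ComplexOrder
open WeakDual
set_option linter.unusedSectionVars false

namespace RegularInclusion

variable {A : Type*} [NormedRing A] [StarRing A] [CStarRing A] [CompleteSpace A]
  [NormedAlgebra ℂ A] [StarModule ℂ A]


lemma key_aux [PartialOrder A] [StarOrderedRing A]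
    (D : StarSubalgebra ℂ A) (E : A →ₗ[ℂ] A) (hE : IsCondExp D E)
    (v : A) (hv : v ∈ normSet D) {h : A} (hh : h ∈ D) :
    (v * h * star v) * E v = E v * (h * (star v * v)) := by
  have hs : star v * v ∈ D := normSet.star_mul_self_mem hv
  have h1 : h * (star v * v) ∈ D := D.mul_mem hh hs
  have h2 : v * h * star v ∈ D := hv.2 h hh
  have e1 : E (v * (h * (star v * v))) = E v * (h * (star v * v)) := by
    have := hE.bimod 1 D.one_mem _ h1 v
    simpa using this
  have e2 : E ((v * h * star v) * v) = (v * h * star v) * E v := by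
    have := hE.bimod _ h2 1 D.one_mem v
    simpa using this
  have e3 : v * (h * (star v * v)) = (v * h * star v) * v := by
    simp [mul_assoc]
  rw [← e2, ← e3, e1]

lemma sa_comm [PartialOrder A] [StarOrderedRing A]
    (D : StarSubalgebra ℂ A) (hD : IsInclusion D)
    (E : A →ₗ[ℂ] A) (hE : IsCondExp D E)
    (v : A) (hv : v ∈ normSet D) {d : A} (hd : d ∈ D) (hds : star d = d) :
    d * (star v * E v) = (star v * E v) * d := by
  obtain ⟨hc, -⟩ := hD
  set u := E v with hu'
  have hu : u ∈ D := hE.mem v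
  have hs : star v * v ∈ D := normSet.star_mul_self_mem hv
  have hud : u * d = d * u := hc u hu d hd
  have hsd : (star v * v) * d = d * (star v * v) := hc _ hs d hd
  have hdd : d * d ∈ D := D.mul_mem hd hd
  have k1 : (v * d * star v) * u = u * (d * (star v * v)) := key_aux D E hE v hv hd
  have k2 : (v * (d * d) * star v) * u = u * ((d * d) * (star v * v)) :=
    key_aux D E hE v hv hdd
  have k3 : (v * star v) * u = u * (star v * v) := by
    have := key_aux D E hE v hv D.one_mem
    simpa using this
  have hq : star v * d * u = star v * u * d := by
    rw [mul_assoc, ← hud, ← mul_assoc]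
  have t1 : v * d * (d * star v * u) = u * (d * (d * (star v * v))) := by
    calc v * d * (d * star v * u) = (v * (d * d) * star v) * u := by noncomm_ring
      _ = u * ((d * d) * (star v * v)) := k2
      _ = u * (d * (d * (star v * v))) := by noncomm_ring
  have t2 : v * d * (star v * d * u) = u * (d * (d * (star v * v))) := by
    calc v * d * (star v * d * u) = v * d * (star v * u * d) := by rw [hq]
      _ = ((v * d * star v) * u) * d := by noncomm_ring
      _ = (u * (d * (star v * v))) * d := by rw [k1]
      _ = u * (d * ((star v * v) * d)) := by noncomm_ring
      _ = u * (d * (d * (star v * v))) := by rw [hsd]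
  have t3 : d * v * (d * star v * u) = u * (d * (d * (star v * v))) := by
    calc d * v * (d * star v * u) = d * ((v * d * star v) * u) := by noncomm_ring
      _ = d * (u * (d * (star v * v))) := by rw [k1]
      _ = (d * u) * (d * (star v * v)) := by noncomm_ring
      _ = (u * d) * (d * (star v * v)) := by rw [hud]
      _ = u * (d * (d * (star v * v))) := by noncomm_ring
  have t4 : d * v * (star v * d * u) = u * (d * (d * (star v * v))) := by
    calc d * v * (star v * d * u) = d * v * (star v * u * d) := by rw [hq]
      _ = d * (((v * star v) * u) * d) := by noncomm_ring
      _ = d * ((u * (star v * v)) * d) := by rw [k3]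
      _ = (d * u) * ((star v * v) * d) := by noncomm_ring
      _ = (u * d) * (d * (star v * v)) := by rw [hud, hsd]
      _ = u * (d * (d * (star v * v))) := by noncomm_ring
  have G : (v * d - d * v) * ((d * star v - star v * d) * u) = 0 := by
    have expand : (v * d - d * v) * ((d * star v - star v * d) * u)
        = v * d * (d * star v * u) - v * d * (star v * d * u)
          - d * v * (d * star v * u) + d * v * (star v * d * u) := by noncomm_ring
    rw [expand, t1, t2, t3, t4]
    abel
  set z := d * (star v * u) - (star v * u) * d with hz'
  have hzeq : z = (d * star v - star v * d) * u := by
    rw [hz', sub_mul, hq]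
    noncomm_ring
  have hstar : star z = star u * (v * d - d * v) := by
    rw [hzeq, star_mul, star_sub, star_mul, star_mul, star_star, hds]
  have hzz : star z * z = 0 := by
    calc star z * z
        = star u * ((v * d - d * v) * ((d * star v - star v * d) * u)) := by
          rw [hstar, hzeq, mul_assoc]
      _ = star u * 0 := by rw [G]
      _ = 0 := mul_zero _
  have hz0 : z = 0 := by
    rwa [CStarRing.star_mul_self_eq_zero_iff] at hzz
  have := sub_eq_zero.mp hz0
  exact this

/-- If the inclusion `(A,D)` admits a conditional expectation `E : A → D`,
then for every normalizer `v`, `v*·E(v)` belongs to the relative commutant `D^c`. -/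
theorem stmt6 [PartialOrder A] [StarOrderedRing A]
    (D : StarSubalgebra ℂ A) (hD : IsInclusion D)
    (E : A →ₗ[ℂ] A) (hE : IsCondExp D E)
    (v : A) (hv : v ∈ normSet D) :
    star v * E v ∈ relComm D := by
  intro d hd
  have hd' : d ∈ D := hd
  have ha : (1/2 : ℂ) • (d + star d) ∈ D := D.smul_mem (add_mem hd' (star_mem hd')) _
  have has : star ((1/2 : ℂ) • (d + star d)) = (1/2 : ℂ) • (d + star d) := by
    simp [star_smul, star_add, add_comm]
  have hb : (1/2 : ℂ) • (d - star d) ∈ D := D.smul_mem (sub_mem hd' (star_mem hd')) _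
  have h1 : ((1/2 : ℂ) • (d + star d)) * (star v * E v)
      = (star v * E v) * ((1/2 : ℂ) • (d + star d)) :=
    sa_comm D hD E hE v hv ha has
  have hbd : (1/2 : ℂ) • (d - star d) = Complex.I • ((Complex.I / 2) • (star d - d)) := by
    rw [smul_smul]
    have : Complex.I * (Complex.I / 2) = -(1/2) := by
      rw [← mul_div_assoc, Complex.I_mul_I, neg_div]
    rw [this, neg_smul, ← smul_neg, neg_sub]
  have hbmem : (Complex.I / 2 : ℂ) • (star d - d) ∈ D :=
    D.smul_mem (sub_mem (star_mem hd') hd') _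
  have hbs : star ((Complex.I / 2 : ℂ) • (star d - d))
      = (Complex.I / 2 : ℂ) • (star d - d) := by
    have hstarc : star (Complex.I / 2 : ℂ) = -(Complex.I / 2) := by
      simp [Complex.star_def, map_div₀, Complex.conj_I, neg_div]
    rw [star_smul, star_sub, star_star, hstarc, neg_smul, ← smul_neg, neg_sub]
  have h2 : ((Complex.I / 2 : ℂ) • (star d - d)) * (star v * E v)
      = (star v * E v) * ((Complex.I / 2 : ℂ) • (star d - d)) :=
    sa_comm D hD E hE v hv hbmem hbs
  have hdecomp : d = (1/2 : ℂ) • (d + star d) + (1/2 : ℂ) • (d - star d) := by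
    rw [smul_add, smul_sub]
    module
  rw [hdecomp, hbd, add_mul, mul_add, h1, smul_mul_assoc, mul_smul_comm, h2]
  simp [mul_smul_comm]

end RegularInclusion
end

section
/- Let (C,D) be an inclusion, v₁, v₂ ∈ N(C,D), and σ a character of D with σ(v₁*v₁) > 0 and σ(v₂*v₂) > 0. Suppose there exist h, k ∈ D with σ(h)·σ(k) ≠ 0 and v₁h = v₂k. Then β_{v₁} and β_{v₂} have the same germ at σ: there is an open set U ⊆ D̂ containing σ such that every ρ ∈ U satisfies ρ(v₁*v₁) > 0, ρ(v₂*v₂) > 0, and β_{v₁}(ρ) = β_{v₂}(ρ) (equivalently, ρ(v₁*d v₁)·ρ(v₂*v₂) = ρ(v₂*d v₂)·ρ(v₁*v₁) for all d ∈ D). -/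
open scoped ComplexOrder
open WeakDual
set_option linter.unusedSectionVars false

namespace RegularInclusion

variable {A : Type*} [NormedRing A] [StarRing A] [CStarRing A] [CompleteSpace A]
  [NormedAlgebra ℂ A] [StarModule ℂ A]

/-- If `v₁ h = v₂ k` for some `h, k ∈ D` with `σ(h)·σ(k) ≠ 0`, then `β_{v₁}`
and `β_{v₂}` have the same germ at `σ`. -/
theorem stmt7 (D : StarSubalgebra ℂ A) (hD : IsInclusion D)
    (v₁ v₂ : A) (hv₁ : v₁ ∈ normSet D) (hv₂ : v₂ ∈ normSet D)
    (σ : characterSpace ℂ ↥D)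
    (hσ₁ : 0 < σ (⟨star v₁ * v₁, normSet.star_mul_self_mem hv₁⟩ : D))
    (hσ₂ : 0 < σ (⟨star v₂ * v₂, normSet.star_mul_self_mem hv₂⟩ : D))
    (h k : A) (hh : h ∈ D) (hk : k ∈ D)
    (hne : σ (⟨h, hh⟩ : D) * σ (⟨k, hk⟩ : D) ≠ 0)
    (heq : v₁ * h = v₂ * k) :
    ∃ U : Set (characterSpace ℂ ↥D), IsOpen U ∧ σ ∈ U ∧
      ∀ ρ ∈ U,
        0 < ρ (⟨star v₁ * v₁, normSet.star_mul_self_mem hv₁⟩ : D) ∧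
        0 < ρ (⟨star v₂ * v₂, normSet.star_mul_self_mem hv₂⟩ : D) ∧
        ∀ e : D,
          ρ (⟨star v₁ * (e : A) * v₁, hv₁.1 (e : A) e.2⟩ : D) *
              ρ (⟨star v₂ * v₂, normSet.star_mul_self_mem hv₂⟩ : D)
            = ρ (⟨star v₂ * (e : A) * v₂, hv₂.1 (e : A) e.2⟩ : D) *
              ρ (⟨star v₁ * v₁, normSet.star_mul_self_mem hv₁⟩ : D) := by
  have hcl : IsClosed (D : Set A) := hD.2
  haveI : CompleteSpace ↥D := hcl.completeSpace_coe
  haveI : StarHomClass (characterSpace ℂ ↥D) ↥D ℂ :=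
    @AlgHomClass.instStarHomClass (characterSpace ℂ ↥D) ↥D ⟨⟩ inferInstance inferInstance
  set q₁ : D := (⟨star v₁ * v₁, normSet.star_mul_self_mem hv₁⟩ : D) with hq₁
  set q₂ : D := (⟨star v₂ * v₂, normSet.star_mul_self_mem hv₂⟩ : D) with hq₂
  set h' : D := (⟨h, hh⟩ : D) with hh'
  set k' : D := (⟨k, hk⟩ : D) with hk'
  set H : D := (⟨star h * h, mul_mem (star_mem hh) hh⟩ : D) with hH
  have contq : ∀ q : D, Continuous fun ρ : characterSpace ℂ ↥D => ρ q := fun q =>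
    (WeakDual.eval_continuous q).comp continuous_subtype_val
  refine ⟨{ρ | 0 < (ρ q₁).re} ∩ {ρ | 0 < (ρ q₂).re} ∩ {ρ | ρ H ≠ 0}, ?_, ?_, ?_⟩
  · refine IsOpen.inter (IsOpen.inter ?_ ?_) ?_
    · exact isOpen_lt continuous_const (Complex.continuous_re.comp (contq q₁))
    · exact isOpen_lt continuous_const (Complex.continuous_re.comp (contq q₂))
    · exact IsOpen.preimage (contq H) isOpen_compl_singleton
  · have hmul : H = (⟨star h, star_mem hh⟩ : D) * h' := Subtype.ext rfl
    have hstar : (⟨star h, star_mem hh⟩ : D) = star h' := Subtype.ext rfl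
    have hσh : σ h' ≠ 0 := fun h0 => hne (by rw [h0, zero_mul])
    have hσH : σ H ≠ 0 := by
      rw [hmul, map_mul, hstar, map_star]
      exact mul_ne_zero (star_ne_zero.mpr hσh) hσh
    exact ⟨⟨(Complex.lt_def.mp hσ₁).1, (Complex.lt_def.mp hσ₂).1⟩, hσH⟩
  · rintro ρ ⟨⟨hρ₁, hρ₂⟩, hρH⟩
    have selfadj : ∀ (v : A) (hv : v ∈ normSet D),
        0 < (ρ (⟨star v * v, normSet.star_mul_self_mem hv⟩ : D)).re →
        0 < ρ (⟨star v * v, normSet.star_mul_self_mem hv⟩ : D) := by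
      intro v hv hre
      set q : D := (⟨star v * v, normSet.star_mul_self_mem hv⟩ : D)
      have hsq : star q = q := Subtype.ext (by simp [q, star_mul, mul_assoc])
      have him : (ρ q).im = 0 := by
        have : star (ρ q) = ρ q := by rw [← map_star, hsq]
        exact Complex.conj_eq_iff_im.mp this
      exact Complex.lt_def.mpr ⟨by simpa using hre, by simp [him]⟩
    refine ⟨selfadj v₁ hv₁ hρ₁, selfadj v₂ hv₂ hρ₂, ?_⟩
    intro e
    set X₁ : D := (⟨star v₁ * (e : A) * v₁, hv₁.1 (e : A) e.2⟩ : D) with hX₁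
    set X₂ : D := (⟨star v₂ * (e : A) * v₂, hv₂.1 (e : A) e.2⟩ : D) with hX₂
    have key : ∀ (x : A), star h * (star v₁ * x * v₁) * h = star k * (star v₂ * x * v₂) * k := by
      intro x
      have h1 : star (v₁ * h) * x * (v₁ * h) = star (v₂ * k) * x * (v₂ * k) := by rw [heq]
      simpa [star_mul, mul_assoc] using h1
    have hD1 : (⟨star h, star_mem hh⟩ : D) * X₁ * h' = (⟨star k, star_mem hk⟩ : D) * X₂ * k' :=
      Subtype.ext (key (e : A))
    have hD2 : (⟨star h, star_mem hh⟩ : D) * q₁ * h' = (⟨star k, star_mem hk⟩ : D) * q₂ * k' :=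
      Subtype.ext (by simpa using key (1 : A))
    have e1 := congrArg ρ hD1
    have e2 := congrArg ρ hD2
    rw [map_mul, map_mul, map_mul, map_mul] at e1 e2
    have ha : ρ (⟨star h, star_mem hh⟩ : D) * ρ h' ≠ 0 := by
      have hmul : H = (⟨star h, star_mem hh⟩ : D) * h' := Subtype.ext rfl
      rw [hmul] at hρH
      simp only [Set.mem_setOf_eq, map_mul] at hρH
      exact hρH
    refine mul_left_cancel₀ ha ?_
    linear_combination (ρ q₂) * e1 - (ρ X₂) * e2


end RegularInclusion
end

section
/- Let (C,D) be an inclusion admitting a conditional expectation E : C → D, let v₁, v₂ ∈ N(C,D), and let σ be a character of D with σ(v₁*v₁) > 0 and σ(v₂*v₂) > 0. If there exist h, k ∈ D with σ(h)·σ(k) ≠ 0 and v₁h = v₂k, then σ(E(v₂*v₁)) ≠ 0. -/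
open scoped ComplexOrder
open WeakDual
set_option linter.unusedSectionVars false

namespace RegularInclusion

variable {A : Type*} [NormedRing A] [StarRing A] [CStarRing A] [CompleteSpace A]
  [NormedAlgebra ℂ A] [StarModule ℂ A]

/-- In the presence of a conditional expectation `E : A → D`, if `v₁ h = v₂ k`
for some `h, k ∈ D` with `σ(h)·σ(k) ≠ 0`, then `σ(E(v₂* v₁)) ≠ 0`. -/
theorem stmt8 [PartialOrder A] [StarOrderedRing A]
    (D : StarSubalgebra ℂ A) (hD : IsInclusion D)
    (E : A →ₗ[ℂ] A) (hE : IsCondExp D E)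
    (v₁ v₂ : A) (hv₁ : v₁ ∈ normSet D) (hv₂ : v₂ ∈ normSet D)
    (σ : characterSpace ℂ ↥D)
    (hσ₁ : 0 < σ (⟨star v₁ * v₁, normSet.star_mul_self_mem hv₁⟩ : D))
    (hσ₂ : 0 < σ (⟨star v₂ * v₂, normSet.star_mul_self_mem hv₂⟩ : D))
    (h k : A) (hh : h ∈ D) (hk : k ∈ D)
    (hne : σ (⟨h, hh⟩ : D) * σ (⟨k, hk⟩ : D) ≠ 0)
    (heq : v₁ * h = v₂ * k) :
    σ (⟨E (star v₂ * v₁), hE.mem _⟩ : D) ≠ 0 := by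
  intro h0
  have hd1 : star v₂ * v₁ * h = star v₂ * v₂ * k := by
    rw [mul_assoc, heq, mul_assoc]
  have h2 : E (star v₂ * v₁ * h) = E (star v₂ * v₁) * h := by
    simpa using hE.bimod 1 D.one_mem h hh (star v₂ * v₁)
  have h3 : E (star v₂ * v₂ * k) = star v₂ * v₂ * k :=
    hE.idOn _ (D.mul_mem (normSet.star_mul_self_mem hv₂) hk)
  have hE1 : E (star v₂ * v₁) * h = star v₂ * v₂ * k := by
    rw [← h2, hd1, h3]
  have key : σ ((⟨E (star v₂ * v₁), hE.mem _⟩ : D) * ⟨h, hh⟩)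
      = σ ((⟨star v₂ * v₂, normSet.star_mul_self_mem hv₂⟩ : D) * ⟨k, hk⟩) := by
    congr 1
    exact Subtype.ext hE1
  have keyL := map_mul σ (⟨E (star v₂ * v₁), hE.mem _⟩ : D) ⟨h, hh⟩
  have keyR := map_mul σ (⟨star v₂ * v₂, normSet.star_mul_self_mem hv₂⟩ : D) ⟨k, hk⟩
  have final : σ (⟨star v₂ * v₂, normSet.star_mul_self_mem hv₂⟩ : D) * σ (⟨k, hk⟩ : D) = 0 :=
    keyR.symm.trans (key.symm.trans (keyL.trans (mul_eq_zero_of_left h0 _)))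
  exact mul_ne_zero (ne_of_gt hσ₂) (mul_ne_zero_iff.mp hne).2 final

end RegularInclusion
end

section
/- Let D₁ ⊆ D₂ ⊆ D₃ be commutative unital C*-algebras, with D₁ and D₂ unital C*-subalgebras of D₃ containing its unit. Then (D₃,D₁) is an essential inclusion if and only if both (D₃,D₂) and (D₂,D₁) are essential inclusions. -/
open scoped ComplexOrder
open WeakDual
set_option linter.unusedSectionVars false

namespace RegularInclusion

section Stmt9Aux
variable {T : Type*} [CommCStarAlgebra T]

lemma cfc_mem_of_mem_closed' (D : StarSubalgebra ℂ T) (hc : IsClosed (D : Set T))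
    {a : T} (haD : a ∈ D) (f : ℂ → ℂ) : cfc f a ∈ D := by
  haveI ha : IsStarNormal a := ⟨mul_comm _ _⟩
  by_cases hf : ContinuousOn f (spectrum ℂ a)
  · rw [cfc_apply f a ha hf, cfcHom_eq_of_isStarNormal]
    exact StarAlgebra.elemental.le_of_mem hc haD (SetLike.coe_mem _)
  · rw [cfc_apply_of_not_continuousOn a hf]
    exact zero_mem _

lemma mem_ideal_of_mem_closure' (D : StarSubalgebra ℂ T) (hc : IsClosed (D : Set T))
    (J : TwoSidedIdeal ↥D) (hJc : IsClosed ((J : Set ↥D))) (a : ↥D) (haJ : a ∈ J)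
    (hspec : ∀ z ∈ spectrum ℂ (a : T), ∃ s : ℝ, 0 ≤ s ∧ z = s)
    {x : T} (hxD : x ∈ D)
    (hx : x ∈ closure ((Ideal.span {(a : T)} : Ideal T) : Set T)) :
    (⟨x, hxD⟩ : ↥D) ∈ J := by
  haveI hna : IsStarNormal ((a : T)) := ⟨mul_comm _ _⟩
  have hval : Topology.IsClosedEmbedding ((↑) : ↥D → T) :=
    Topology.IsClosedEmbedding.subtypeVal hc
  have hJT : IsClosed (Subtype.val '' (J : Set ↥D)) := hval.isClosedMap _ hJc
  suffices hxc : x ∈ closure (Subtype.val '' (J : Set ↥D)) by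
    rw [hJT.closure_eq] at hxc
    obtain ⟨y, hyJ, hyx⟩ := hxc
    have hyval : y = (⟨x, hxD⟩ : ↥D) := Subtype.ext hyx
    rwa [hyval] at hyJ
  rw [Metric.mem_closure_iff]
  intro ε hε
  obtain ⟨z, hz, hdz⟩ := Metric.mem_closure_iff.mp hx (ε/3) (by positivity)
  obtain ⟨t, htz⟩ := Ideal.mem_span_singleton'.mp hz
  subst htz
  set δ : ℝ := ε / (3 * (‖t‖ + 1)) with hδdef
  have hδ : 0 < δ := by positivity
  set g : T := cfc (fun w : ℂ => (w + δ)⁻¹) (a : T) with hgdef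
  have hgD : g ∈ D := cfc_mem_of_mem_closed' D hc a.2 _
  -- the normalized element u
  set u : T := (a : T) * g with hudef
  have hne : ∀ w ∈ spectrum ℂ (a : T), w + (δ:ℂ) ≠ 0 := by
    intro w hw hcon
    obtain ⟨s, hs, rfl⟩ := hspec w hw
    have h0 : (((s + δ : ℝ)) : ℂ) = 0 := by push_cast; exact hcon
    have := Complex.ofReal_eq_zero.mp h0
    linarith
  have hfc : ContinuousOn (fun w : ℂ => (w + δ)⁻¹) (spectrum ℂ (a:T)) :=
    ContinuousOn.inv₀ (by fun_prop) hne
  have h1 : u = cfc (fun w : ℂ => w * (w + δ)⁻¹) (a:T) := by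
    rw [hudef, hgdef, cfc_mul (fun w : ℂ => w) _ (a:T) continuousOn_id hfc, cfc_id' ℂ (a:T)]
  have hu1 : ‖u‖ ≤ 1 := by
    rw [h1]
    apply norm_cfc_le zero_le_one
    intro w hw
    obtain ⟨s, hs, rfl⟩ := hspec w hw
    have key : (s:ℂ) * ((s:ℂ) + δ)⁻¹ = (((s / (s + δ) : ℝ)) : ℂ) := by push_cast; ring
    rw [key, Complex.norm_real, Real.norm_eq_abs, abs_of_nonneg (by positivity),
      div_le_one (by positivity)]
    linarith
  have hau : ‖(a:T) * u - (a:T)‖ ≤ δ := by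
    have hq1 : ContinuousOn (fun w : ℂ => w * (w + δ)⁻¹) (spectrum ℂ (a:T)) :=
      continuousOn_id.mul hfc
    have hq2 : ContinuousOn (fun w : ℂ => w * (w * (w + δ)⁻¹)) (spectrum ℂ (a:T)) :=
      continuousOn_id.mul hq1
    have h2 : (a:T) * u - (a:T) = cfc (fun w : ℂ => w * (w * (w + δ)⁻¹) - w) (a:T) := by
      rw [cfc_sub (fun w : ℂ => w * (w * (w + δ)⁻¹)) (fun w : ℂ => w) (a:T) hq2 (by fun_prop),
        cfc_mul (fun w : ℂ => w) (fun w : ℂ => w * (w + δ)⁻¹) (a:T) (by fun_prop) hq1,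
        cfc_id' ℂ (a:T), ← h1]
    rw [h2]
    apply norm_cfc_le hδ.le
    intro w hw
    obtain ⟨s, hs, rfl⟩ := hspec w hw
    have hne' : (s:ℝ) + δ ≠ 0 := by positivity
    have hCne : (s:ℂ) + (δ:ℂ) ≠ 0 := by
      have h' : (((s + δ : ℝ)) : ℂ) ≠ 0 := Complex.ofReal_ne_zero.mpr hne'
      push_cast at h'; exact h'
    have key : (s:ℂ) * ((s:ℂ) * ((s:ℂ) + δ)⁻¹) - s = -(((s * δ / (s + δ) : ℝ)) : ℂ) := by
      push_cast
      field_simp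
      ring
    rw [key, norm_neg, Complex.norm_real, Real.norm_eq_abs, abs_of_nonneg (by positivity),
      div_le_iff₀ (by positivity)]
    nlinarith
  -- the approximating element of J
  refine ⟨(⟨x, hxD⟩ * (a * ⟨g, hgD⟩) : ↥D), ⟨_, J.mul_mem_left _ _ (J.mul_mem_right _ _ haJ), rfl⟩, ?_⟩
  have hcoe : ((⟨x, hxD⟩ * (a * ⟨g, hgD⟩) : ↥D) : T) = x * u := rfl
  rw [hcoe, dist_eq_norm]
  have hn : ‖x - t * (a:T)‖ < ε / 3 := by rwa [dist_eq_norm] at hdz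
  have hiden : x - x * u = (x - t * (a:T)) - (x - t * (a:T)) * u - t * ((a:T) * u - (a:T)) := by
    ring
  rw [hiden]
  have e1 : ‖(x - t * (a:T)) * u‖ ≤ ‖x - t * (a:T)‖ := by
    calc ‖(x - t * (a:T)) * u‖ ≤ ‖x - t * (a:T)‖ * ‖u‖ := norm_mul_le _ _
    _ ≤ ‖x - t * (a:T)‖ * 1 := mul_le_mul_of_nonneg_left hu1 (norm_nonneg _)
    _ = _ := mul_one _
  have e2 : ‖t * ((a:T) * u - (a:T))‖ ≤ ‖t‖ * δ := by
    calc ‖t * ((a:T) * u - (a:T))‖ ≤ ‖t‖ * ‖(a:T) * u - (a:T)‖ := norm_mul_le _ _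
    _ ≤ ‖t‖ * δ := mul_le_mul_of_nonneg_left hau (norm_nonneg _)
  have etri : ‖(x - t * (a:T)) - (x - t * (a:T)) * u - t * ((a:T) * u - (a:T))‖
      ≤ ‖x - t * (a:T)‖ + ‖(x - t * (a:T)) * u‖ + ‖t * ((a:T) * u - (a:T))‖ := by
    calc _ ≤ ‖(x - t * (a:T)) - (x - t * (a:T)) * u‖ + ‖t * ((a:T) * u - (a:T))‖ :=
        norm_sub_le _ _
    _ ≤ _ := by gcongr; exact norm_sub_le _ _
  have htb : ‖t‖ * δ < ε / 3 := by
    have hlt : ‖t‖ * δ < (‖t‖ + 1) * δ := mul_lt_mul_of_pos_right (lt_add_one _) hδ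
    have heq : (‖t‖ + 1) * δ = ε / 3 := by
      rw [hδdef]
      have hne0 : ‖t‖ + 1 ≠ 0 := by positivity
      field_simp
    linarith
  calc ‖(x - t * (a:T)) - (x - t * (a:T)) * u - t * ((a:T) * u - (a:T))‖
      ≤ ‖x - t * (a:T)‖ + ‖(x - t * (a:T)) * u‖ + ‖t * ((a:T) * u - (a:T))‖ := etri
    _ < ε/3 + ε/3 + ε/3 :=
        add_lt_add (add_lt_add hn (e1.trans_lt hn)) (e2.trans_lt htb)
    _ = ε := by ring
end Stmt9Aux

/-- For commutative unital `C*`-algebras `D₁ ⊆ D₂ ⊆ D₃`, the inclusion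
`(D₃,D₁)` is essential iff both `(D₃,D₂)` and `(D₂,D₁)` are essential. -/
theorem stmt9 {T : Type*} [NormedCommRing T] [StarRing T] [CStarRing T] [CompleteSpace T]
    [NormedAlgebra ℂ T] [StarModule ℂ T]
    (D₁ D₂ : StarSubalgebra ℂ T) (h12 : D₁ ≤ D₂)
    (hc1 : IsClosed (D₁ : Set T)) (hc2 : IsClosed (D₂ : Set T)) :
    EssentialInSet T (D₁ : Set T)
      ↔ (EssentialInSet T (D₂ : Set T) ∧
          EssentialInSet ↥D₂ {x : ↥D₂ | (x : T) ∈ D₁}) := by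
  letI : CommCStarAlgebra T := { }
  constructor
  · intro hE
    constructor
    · -- `(T, D₂)` is essential
      intro J hJc hJ2
      apply hE J hJc
      ext y
      simp only [Set.mem_inter_iff, Set.mem_singleton_iff, SetLike.mem_coe]
      constructor
      · rintro ⟨hyJ, hyD1⟩
        have hmem : y ∈ (J : Set T) ∩ (D₂ : Set T) := ⟨hyJ, h12 hyD1⟩
        rw [hJ2] at hmem
        exact hmem
      · rintro rfl
        exact ⟨J.zero_mem, D₁.zero_mem⟩
    · -- `(D₂, D₁)` is essential
      intro J hJc hJint
      refine SetLike.ext fun b => ⟨fun hbJ => ?_, fun hb => ?_⟩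
      swap
      · rw [TwoSidedIdeal.mem_bot] at hb
        rw [hb]; exact J.zero_mem
      rw [TwoSidedIdeal.mem_bot]
      set a : ↥D₂ := star b * b with hadef
      have haJ : a ∈ J := J.mul_mem_left _ _ hbJ
      have hacoe : (a : T) = star (b : T) * (b : T) := rfl
      have hsa : IsSelfAdjoint (a : T) := hacoe ▸ IsSelfAdjoint.star_mul_self (b : T)
      have hspec : ∀ z ∈ spectrum ℂ (a : T), ∃ s : ℝ, 0 ≤ s ∧ z = s := by
        intro z hz
        have hres := hsa.spectrumRestricts
        rw [← hres.algebraMap_image] at hz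
        obtain ⟨s, hs, rfl⟩ := hz
        refine ⟨s, ?_, rfl⟩
        have hnn := spectrum_star_mul_self_nonneg (b := (b : T)) (A := T)
        rw [hacoe] at hs
        exact hnn s hs
      set I : Ideal T := Ideal.span {(a : T)} with hIdef
      set Ic : Ideal T := I.topologicalClosure with hIcdef
      set K : TwoSidedIdeal T := TwoSidedIdeal.mk' (Ic : Set T) Ic.zero_mem
        (fun hx hy => Ic.add_mem hx hy) (fun hx => Ic.neg_mem hx)
        (fun {r y} hy => by simpa [smul_eq_mul] using Ic.smul_mem r hy)
        (fun {y r} hx => by rw [mul_comm]; simpa [smul_eq_mul] using Ic.smul_mem r hx)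
        with hKdef
      have hKs : (K : Set T) = (Ic : Set T) := TwoSidedIdeal.coe_mk' _ _ _ _ _ _
      have hKc : IsClosed (K : Set T) := by
        rw [hKs]; exact I.isClosed_topologicalClosure
      have hKint : (K : Set T) ∩ (D₁ : Set T) = {0} := by
        ext y
        simp only [Set.mem_inter_iff, Set.mem_singleton_iff, SetLike.mem_coe]
        constructor
        · rintro ⟨hyK, hyD1⟩
          have hyD2 : y ∈ D₂ := h12 hyD1
          have hyc : y ∈ closure ((I : Ideal T) : Set T) := by
            have : y ∈ (Ic : Set T) := by rw [← hKs]; exact hyK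
            rwa [hIcdef, Submodule.topologicalClosure_coe] at this
          have hyJ := mem_ideal_of_mem_closure' D₂ hc2 J hJc a haJ hspec hyD2 hyc
          have h0 : (⟨y, hyD2⟩ : ↥D₂) ∈ (J : Set ↥D₂) ∩ {x : ↥D₂ | (x : T) ∈ D₁} :=
            ⟨hyJ, hyD1⟩
          rw [hJint] at h0
          simpa [Subtype.ext_iff] using h0
        · rintro rfl
          exact ⟨K.zero_mem, D₁.zero_mem⟩
      have hKbot := hE K hKc hKint
      have haK : (a : T) ∈ K := by
        rw [← SetLike.mem_coe, hKs]
        exact I.le_topologicalClosure (Ideal.subset_span rfl)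
      rw [hKbot, TwoSidedIdeal.mem_bot] at haK
      have hstar : star (b : T) * (b : T) = 0 := by rw [← hacoe, haK]
      have hb0 : (b : T) = 0 := (CStarRing.star_mul_self_eq_zero_iff _).mp hstar
      exact Subtype.coe_injective (by simpa using hb0)
  · rintro ⟨hT2, hRel⟩ J hJc hJ1
    apply hT2 J hJc
    set K : TwoSidedIdeal ↥D₂ := TwoSidedIdeal.comap (D₂.subtype) J with hKdef
    have hKmem : ∀ x : ↥D₂, x ∈ K ↔ (x : T) ∈ J := fun x => TwoSidedIdeal.mem_comap _
    have hKc : IsClosed (K : Set ↥D₂) := by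
      have : (K : Set ↥D₂) = (Subtype.val) ⁻¹' (J : Set T) :=
        Set.ext fun x => hKmem x
      rw [this]
      exact hJc.preimage continuous_subtype_val
    have hKint : (K : Set ↥D₂) ∩ {x : ↥D₂ | (x : T) ∈ D₁} = {0} := by
      ext x
      simp only [Set.mem_inter_iff, Set.mem_singleton_iff, SetLike.mem_coe, Set.mem_setOf_eq]
      constructor
      · rintro ⟨hxK, hxD1⟩
        have hmem : (x : T) ∈ (J : Set T) ∩ (D₁ : Set T) := ⟨(hKmem x).mp hxK, hxD1⟩
        rw [hJ1] at hmem
        exact Subtype.coe_injective (by simpa using hmem)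
      · rintro rfl
        exact ⟨K.zero_mem, D₁.zero_mem⟩
    have hKbot := hRel K hKc hKint
    ext y
    simp only [Set.mem_inter_iff, Set.mem_singleton_iff, SetLike.mem_coe]
    constructor
    · rintro ⟨hyJ, hyD2⟩
      have : (⟨y, hyD2⟩ : ↥D₂) ∈ K := (hKmem _).mpr hyJ
      rw [hKbot, TwoSidedIdeal.mem_bot] at this
      simpa [Subtype.ext_iff] using this
    · rintro rfl
      exact ⟨J.zero_mem, D₂.zero_mem⟩

end RegularInclusion
end

section
/- Let (C,D) be a regular inclusion and φ a norm-one eigenfunctional. Suppose v, w ∈ N(C,D) and f, g ∈ Mod(C,D) satisfy f(v*v) > 0, g(w*w) > 0, and φ = [v,f] = [w,g], i.e., φ(x) = f(v*x)/f(v*v)^{1/2} = g(w*x)/g(w*w)^{1/2} for all x ∈ C. Then f = g and f(v*w) is real and strictly positive. -/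
open scoped ComplexOrder
open WeakDual
set_option linter.unusedSectionVars false

namespace RegularInclusion

variable {A : Type*} [NormedRing A] [StarRing A] [CStarRing A] [CompleteSpace A]
  [NormedAlgebra ℂ A] [StarModule ℂ A]


section Aux

lemma state_star (f : A →ₗ[ℂ] ℂ) (hf : IsState f) (x : A) :
    f (star x) = starRingEnd ℂ (f x) := by
  have h0 := (Complex.nonneg_iff.mp (hf.2 x)).2
  have h1 := hf.2 (x + 1)
  have h2 := hf.2 (x + Complex.I • 1)
  have e1 : f (star (x + 1) * (x + 1)) = f (star x * x) + f (star x) + f x + 1 := by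
    simp [star_add, add_mul, mul_add, map_add, hf.1]
    ring
  have e2 : f (star (x + Complex.I • 1) * (x + Complex.I • 1))
      = f (star x * x) + Complex.I * f (star x) - Complex.I * f x + 1 := by
    simp [star_add, star_smul, add_mul, mul_add, map_add, map_smul, smul_eq_mul,
      smul_smul, Complex.conj_I, hf.1]
    ring
  rw [e1] at h1
  rw [e2] at h2
  have i1 := (Complex.nonneg_iff.mp h1).2
  have i2 := (Complex.nonneg_iff.mp h2).2
  apply Complex.ext <;>
    simp only [Complex.add_im, Complex.sub_im, Complex.mul_im, Complex.I_re, Complex.I_im,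
      Complex.one_im, Complex.conj_re, Complex.conj_im] at i1 i2 ⊢ <;>
    simp [← h0] at i1 i2 <;> linarith

lemma state_null (f : A →ₗ[ℂ] ℂ) (hf : IsState f) {z : A} (hz : f (star z * z) = 0)
    (x : A) : f (star z * x) = 0 := by
  by_contra hc
  set c : ℂ := f (star z * x) with hcdef
  set X : ℝ := (f (star x * x)).re with hX
  set t : ℝ := -((X + 1) / (2 * Complex.normSq c)) with ht
  set α : ℂ := (t : ℂ) * c with hα
  have hxz : f (star x * z) = starRingEnd ℂ c := by
    simpa [star_mul] using state_star f hf (star z * x)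
  have hfx : f (star x * x) = ((X : ℝ) : ℂ) := Complex.eq_re_of_ofReal_le (hf.2 x)
  have key := hf.2 (α • z + x)
  have hval : f (star (α • z + x) * (α • z + x))
      = starRingEnd ℂ α * c + α * starRingEnd ℂ c + f (star x * x) := by
    simp only [star_add, star_smul, add_mul, mul_add, smul_mul_assoc, mul_smul_comm,
      map_add, map_smul, smul_eq_mul, smul_smul, ← hcdef, hxz, hz, Complex.star_def,
      mul_zero, zero_mul, add_zero, zero_add]
    ring
  rw [hval] at key
  have hsum : starRingEnd ℂ α * c + α * starRingEnd ℂ c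
      = ((2 * t * Complex.normSq c : ℝ) : ℂ) := by
    have h1 : starRingEnd ℂ α * c + α * starRingEnd ℂ c
        = (t : ℂ) * (c * starRingEnd ℂ c) * 2 := by
      rw [hα, map_mul, Complex.conj_ofReal]; ring
    rw [h1, Complex.mul_conj]; push_cast; ring
  rw [hsum, hfx, ← Complex.ofReal_add] at key
  have hre := Complex.zero_le_real.mp key
  have hns : 0 < Complex.normSq c := Complex.normSq_pos.mpr hc
  rw [ht] at hre
  have : 2 * -((X + 1) / (2 * Complex.normSq c)) * Complex.normSq c = -(X + 1) := by
    field_simp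
  rw [this] at hre
  linarith

lemma mod_mul_left {D : StarSubalgebra ℂ A} (f : A →ₗ[ℂ] ℂ) (hf : InMod D f)
    (d : D) (x : A) : f ((d : A) * x) = f (d : A) * f x := by
  set z : A := star (d : A) - starRingEnd ℂ (f (d : A)) • 1 with hzdef
  have hds : f ((d : A) * star (d : A)) = f (d : A) * starRingEnd ℂ (f (d : A)) := by
    have := hf.2 d (star d)
    simpa [state_star f hf.1] using this
  have hstar : f (star (d : A)) = starRingEnd ℂ (f (d : A)) := state_star f hf.1 _
  have hzz : f (star z * z) = 0 := by
    simp only [hzdef, star_sub, star_smul, star_star, star_one, Complex.star_def,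
      Complex.conj_conj, sub_mul, mul_sub, smul_mul_assoc, mul_smul_comm, one_mul, mul_one,
      map_sub, map_smul, smul_eq_mul, smul_smul, hf.1.1, hds, hstar]
    ring
  have := state_null f hf.1 hzz x
  simp only [hzdef, star_sub, star_smul, star_star, star_one, Complex.star_def,
    Complex.conj_conj, sub_mul, one_mul, smul_mul_assoc, map_sub, map_smul, smul_eq_mul]
    at this
  linear_combination this

end Aux

/-- if a norm-one eigenfunctional has two representations `φ = [v,f] = [w,g]`
with `f, g ∈ Mod(A,D)`, then `f = g` and `f(v* w) > 0`. -/
theorem stmt16 (D : StarSubalgebra ℂ A) (hreg : IsRegularIncl D)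
    (φ : A →L[ℂ] ℂ) (r s : ↥D →ₐ[ℂ] ℂ) (hφ : IsEigen D φ r s) (hn : ‖φ‖ = 1)
    (v w : A) (hv : v ∈ normSet D) (hw : w ∈ normSet D)
    (f g : A →ₗ[ℂ] ℂ) (hf : InMod D f) (hg : InMod D g)
    (hfv : 0 < f (star v * v)) (hgw : 0 < g (star w * w))
    (heq1 : ∀ x : A, φ x = evf f v x) (heq2 : ∀ x : A, φ x = evf g w x) :
    f = g ∧ 0 < f (star v * w) := by
  set lam : ℝ := Real.sqrt ((f (star v * v)).re) with hlamdef
  set mu : ℝ := Real.sqrt ((g (star w * w)).re) with hmudef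
  have hfvre : 0 < (f (star v * v)).re := (Complex.pos_iff.mp hfv).1
  have hgwre : 0 < (g (star w * w)).re := (Complex.pos_iff.mp hgw).1
  have hlam : 0 < lam := Real.sqrt_pos.mpr hfvre
  have hmu : 0 < mu := Real.sqrt_pos.mpr hgwre
  have hlne : (lam : ℂ) ≠ 0 := Complex.ofReal_ne_zero.mpr hlam.ne'
  have hmne : (mu : ℂ) ≠ 0 := Complex.ofReal_ne_zero.mpr hmu.ne'
  have hfvv : f (star v * v) = ((lam * lam : ℝ) : ℂ) := by
    rw [hlamdef, Real.mul_self_sqrt hfvre.le]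
    exact Complex.eq_re_of_ofReal_le hfv.le
  have hgww : g (star w * w) = ((mu * mu : ℝ) : ℂ) := by
    rw [hmudef, Real.mul_self_sqrt hgwre.le]
    exact Complex.eq_re_of_ofReal_le hgw.le
  have hfrep : ∀ x, f (star v * x) = (lam : ℂ) * φ x := by
    intro x
    have h := heq1 x
    simp only [evf] at h
    rw [← hlamdef] at h
    rw [h]
    field_simp
  have hgrep : ∀ x, g (star w * x) = (mu : ℂ) * φ x := by
    intro x
    have h := heq2 x
    simp only [evf] at h
    rw [← hmudef] at h
    rw [h]
    field_simp
  have hphiv : ∀ x, φ (v * x) = (lam : ℂ) * f x := by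
    intro x
    have h := hfrep (v * x)
    rw [← mul_assoc] at h
    rw [mod_mul_left f hf ⟨star v * v, normSet.star_mul_self_mem hv⟩ x, hfvv] at h
    apply mul_left_cancel₀ hlne
    rw [← h]
    push_cast
    ring
  have hphiw : ∀ x, φ (w * x) = (mu : ℂ) * g x := by
    intro x
    have h := hgrep (w * x)
    rw [← mul_assoc] at h
    rw [mod_mul_left g hg ⟨star w * w, normSet.star_mul_self_mem hw⟩ x, hgww] at h
    apply mul_left_cancel₀ hmne
    rw [← h]
    push_cast
    ring
  set u : A := star w * v with hudef
  have hu_star : star u = star v * w := by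
    rw [hudef, star_mul, star_star]
  have hfux : ∀ x, f (star u * x) = (lam : ℂ) * ((mu : ℂ) * g x) := by
    intro x
    rw [hu_star, mul_assoc, hfrep (w * x), hphiw x]
  have hgux : ∀ x, g (u * x) = (mu : ℂ) * ((lam : ℂ) * f x) := by
    intro x
    rw [hudef, mul_assoc, hgrep (v * x), hphiv x]
  have hfsu : f (star u) = ((lam * mu : ℝ) : ℂ) := by
    have h := hfux 1
    rw [mul_one, hg.1.1] at h
    rw [h]
    push_cast
    ring
  have hfu : f u = ((lam * mu : ℝ) : ℂ) := by
    have h := state_star f hf.1 (star u)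
    rw [star_star, hfsu, Complex.conj_ofReal] at h
    exact h
  have hgu : g u = ((lam * mu : ℝ) : ℂ) := by
    have h := hgux 1
    rw [mul_one, hf.1.1] at h
    rw [h]
    push_cast
    ring
  have hfuu : f (star u * u) = ((lam * mu : ℝ) : ℂ) * ((lam * mu : ℝ) : ℂ) := by
    rw [hfux u, hgu]
    push_cast
    ring
  set z : A := u - ((lam * mu : ℝ) : ℂ) • 1 with hzdef
  have hzstar : star z = star u - ((lam * mu : ℝ) : ℂ) • 1 := by
    simp [hzdef, star_sub, star_smul, Complex.star_def, Complex.conj_ofReal]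
  have hzz : f (star z * z) = 0 := by
    rw [hzstar, hzdef]
    simp only [sub_mul, mul_sub, smul_mul_assoc, mul_smul_comm, one_mul, mul_one,
      map_sub, map_smul, smul_eq_mul, smul_smul, hfuu, hfu, hfsu, hf.1.1]
    ring
  have hfinal : ∀ x, f (star u * x) = ((lam * mu : ℝ) : ℂ) * f x := by
    intro x
    have h := state_null f hf.1 hzz x
    rw [hzstar] at h
    simp only [sub_mul, smul_mul_assoc, one_mul, map_sub, map_smul, smul_eq_mul] at h
    linear_combination h
  have hfg : ∀ x, f x = g x := by
    intro x
    have h1 := hfinal x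
    rw [hfux x] at h1
    have hne : ((lam * mu : ℝ) : ℂ) ≠ 0 :=
      Complex.ofReal_ne_zero.mpr (mul_pos hlam hmu).ne'
    apply mul_left_cancel₀ hne
    rw [← h1]
    push_cast
    ring
  refine ⟨LinearMap.ext hfg, ?_⟩
  rw [show star v * w = star u from hu_star.symm, hfsu]
  exact Complex.zero_lt_real.mpr (mul_pos hlam hmu)


end RegularInclusion
end

section
/- Let (C,D) be a regular inclusion, let φ be a compatible eigenfunctional with ‖φ‖ = 1, and let v ∈ N(C,D) be such that φ(v) is real and strictly positive. Then the states f(x) := φ(vx)/φ(v) and g(x) := φ(xv)/φ(v) are compatible states: f, g ∈ 𝔖(C,D), i.e., for every w ∈ N(C,D), |f(w)|² ∈ {0, f(w*w)} and |g(w)|² ∈ {0, g(w*w)}. -/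
open scoped ComplexOrder
open WeakDual
set_option linter.unusedSectionVars false

namespace RegularInclusion

variable {A : Type*} [NormedRing A] [StarRing A] [CStarRing A] [CompleteSpace A]
  [NormedAlgebra ℂ A] [StarModule ℂ A]


/-! ### Auxiliary lemmas for Statement 18 -/

section CutoffAux

/-- The cutoff element `1 - L⁻²(e - t₀)²` with `L = ‖e‖ + t₀`. -/
noncomputable def bbElt {B : Type*} [NormedRing B] [NormedAlgebra ℂ B] (e : B) (t₀ : ℝ) : B :=
  1 - (((‖e‖ + t₀)^2)⁻¹ : ℝ) • (e - t₀ • 1)^2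

lemma bb_commute {B : Type*} [NormedRing B] [NormedAlgebra ℂ B] (e : B) (t₀ : ℝ) :
    Commute e (bbElt e t₀) := by
  unfold bbElt
  exact (Commute.one_right e).sub_right
    ((((Commute.refl e).sub_right ((Commute.one_right e).smul_right t₀)).pow_right 2).smul_right _)

lemma bb_complex {B : Type*} [NormedRing B] [NormedAlgebra ℂ B] (e : B) (t₀ : ℝ) :
    bbElt e t₀ = 1 - ((((‖e‖ + t₀)^2)⁻¹ : ℝ) : ℂ) • (e - ((t₀ : ℝ) : ℂ) • 1)^2 := by
  unfold bbElt
  rw [Complex.coe_smul, Complex.coe_smul]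

lemma bb_isSelfAdjoint {B : Type*} [NormedRing B] [StarRing B] [NormedAlgebra ℂ B]
    [StarModule ℂ B] {e : B} (hesa : IsSelfAdjoint e) (t₀ : ℝ) :
    IsSelfAdjoint (bbElt e t₀) := by
  rw [IsSelfAdjoint, bb_complex]
  simp [star_sub, star_smul, star_pow, star_one, hesa.star_eq, Complex.conj_ofReal]

variable {B : Type*} [CStarAlgebra B]

/-- Cutoff estimate: powers of `bbElt e t₀` concentrate the norm near `t₀`. -/
lemma cutoff_aux [Nontrivial B] (e : B) (he : IsSelfAdjoint e) {t₀ δ : ℝ}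
    (ht₀ : 0 < t₀) (hδ : 0 < δ) :
    ∃ n : ℕ, ‖e * (bbElt e t₀)^(2*n)‖ ≤ t₀ + δ := by
  unfold bbElt
  set M := ‖e‖ with hM
  have hM0 : 0 ≤ M := norm_nonneg e
  set L : ℝ := M + t₀ with hL
  have hL0 : 0 < L := by positivity
  set w : ℝ → ℝ := fun t => 1 - (L^2)⁻¹ * (t - t₀)^2 with hw
  set δ' : ℝ := min δ L with hδ'
  have hδ'0 : 0 < δ' := lt_min hδ hL0
  set θ : ℝ := 1 - (δ'/L)^2 with hθ
  have hθ1 : θ < 1 := by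
    have : 0 < (δ'/L)^2 := by positivity
    simp only [hθ]; linarith
  have hθ0 : 0 ≤ θ := by
    have h1 : δ'/L ≤ 1 := by
      rw [div_le_one hL0]; exact min_le_right _ _
    have h2 : (δ'/L)^2 ≤ 1 := by nlinarith [hδ'0.le, div_nonneg hδ'0.le hL0.le]
    simp only [hθ]; linarith
  obtain ⟨n, hn⟩ := exists_pow_lt_of_lt_one (show (0:ℝ) < t₀/(M+1) by positivity) hθ1
  refine ⟨n, ?_⟩
  have hbcfc : (1 - ((L^2)⁻¹ : ℝ) • (e - t₀ • 1)^2) = cfc w e := by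
    rw [hw]
    rw [cfc_sub _ _ e (by fun_prop) (by fun_prop), cfc_const_mul _ _ e (by fun_prop),
      cfc_pow _ _ e (by fun_prop), cfc_sub _ _ e (by fun_prop) (by fun_prop), cfc_id' ℝ e,
      cfc_const t₀ e, cfc_const_one ℝ e, Algebra.algebraMap_eq_smul_one]
  have key : cfc (fun t : ℝ => t * (w t)^(2*n)) e
      = e * (1 - ((L^2)⁻¹ : ℝ) • (e - t₀ • 1)^2)^(2*n) := by
    rw [cfc_mul _ _ e (by fun_prop) (by fun_prop), cfc_pow w (2*n) e (by fun_prop),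
      cfc_id' ℝ e, hbcfc]
  rw [← key]
  apply norm_cfc_le (by positivity)
  intro t ht
  have htM : |t| ≤ M := by
    simpa [Real.norm_eq_abs] using spectrum.norm_le_norm_of_mem ht
  have hwt1 : w t ≤ 1 := by
    have : 0 ≤ (L^2)⁻¹ * (t - t₀)^2 := by positivity
    simp only [hw]; linarith
  have hwt0 : 0 ≤ w t := by
    have h1 : |t - t₀| ≤ L := by
      calc |t - t₀| ≤ |t| + |t₀| := abs_sub _ _
        _ ≤ M + t₀ := by rw [abs_of_pos ht₀]; linarith
    have h2 : (t - t₀)^2 ≤ L^2 := by nlinarith [abs_nonneg (t - t₀), sq_abs (t - t₀)]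
    have h3 : (L^2)⁻¹ * (t - t₀)^2 ≤ 1 := by
      have hL2 : (0:ℝ) < L^2 := by positivity
      calc (L^2)⁻¹ * (t - t₀)^2 ≤ (L^2)⁻¹ * L^2 := by gcongr
        _ = 1 := inv_mul_cancel₀ hL2.ne'
    simp only [hw]; linarith
  have hpow0 : 0 ≤ (w t)^(2*n) := pow_nonneg hwt0 _
  have hpow1 : (w t)^(2*n) ≤ 1 := pow_le_one₀ hwt0 hwt1
  rw [Real.norm_eq_abs, abs_mul, abs_of_nonneg hpow0]
  by_cases hcase : |t - t₀| ≤ δ'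
  · have h1 : |t| ≤ t₀ + δ' := by
      have := abs_sub_abs_le_abs_sub t t₀
      rw [abs_of_pos ht₀] at this
      linarith
    have h2 : δ' ≤ δ := min_le_left _ _
    nlinarith [abs_nonneg t]
  · push_neg at hcase
    have hwθ : w t ≤ θ := by
      have h2 : δ'^2 ≤ (t - t₀)^2 := by nlinarith [abs_nonneg (t-t₀), sq_abs (t-t₀)]
      have : (L^2)⁻¹ * δ'^2 ≤ (L^2)⁻¹ * (t - t₀)^2 := by
        apply mul_le_mul_of_nonneg_left h2 (by positivity)
      have hde : (δ'/L)^2 = (L^2)⁻¹ * δ'^2 := by field_simp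
      simp only [hw, hθ, hde]; linarith
    have hp1 : (w t)^(2*n) ≤ θ^(2*n) := pow_le_pow_left₀ hwt0 hwθ _
    have hp2 : θ^(2*n) ≤ θ^n := pow_le_pow_of_le_one hθ0 hθ1.le (by omega)
    have : |t| * (w t)^(2*n) ≤ M * θ^n := by
      apply mul_le_mul htM (hp1.trans hp2) hpow0 hM0
    have h3 : M * θ^n ≤ (M+1) * (t₀/(M+1)) := by
      apply mul_le_mul (by linarith) hn.le (pow_nonneg hθ0 n) (by linarith)
    have h4 : (M+1) * (t₀/(M+1)) = t₀ := by field_simp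
    linarith

/-- From the cutoff estimate: a functional dominated by the cutoffs is bounded by `c`. -/
lemma bound_aux [Nontrivial B] {e : B} (hesa : IsSelfAdjoint e) {c : ℝ} (hc : 0 < c)
    (F : B → ℂ) (y : ℕ → B)
    (hy : ∀ n, ‖y n‖^2 = ‖(bbElt e (c^2))^n * e * (bbElt e (c^2))^n‖)
    (hF : ∀ n (x : B), ‖F x‖ ≤ ‖y n‖ * ‖x‖) (x : B) : ‖F x‖ ≤ c * ‖x‖ := by
  have hsq : ∀ δ : ℝ, 0 < δ → ‖F x‖^2 ≤ (c^2+δ)*‖x‖^2 := by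
    intro δ hδ
    obtain ⟨n, hn⟩ := cutoff_aux e hesa (show (0:ℝ) < c^2 by positivity) hδ
    have hcm : Commute e (bbElt e (c^2)) := bb_commute e _
    have h1 : (bbElt e (c^2))^n * e * (bbElt e (c^2))^n = e * (bbElt e (c^2))^(2*n) := by
      rw [← (hcm.pow_right n).eq, mul_assoc, ← pow_add, two_mul]
    have h2 := hy n
    rw [h1] at h2
    have h3 := hF n x
    nlinarith [norm_nonneg (y n), norm_nonneg x, norm_nonneg (F x), hn, h2,
      mul_nonneg (norm_nonneg (y n)) (norm_nonneg x)]
  have h4 : ‖F x‖^2 ≤ c^2*‖x‖^2 := by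
    apply le_of_forall_pos_le_add
    intro ε hε
    have h5 := hsq (ε/(‖x‖^2+1)) (by positivity)
    have hd : ε/(‖x‖^2+1) * ‖x‖^2 ≤ ε := by
      rw [div_mul_eq_mul_div, div_le_iff₀ (by positivity)]
      nlinarith [sq_nonneg ‖x‖, hε.le]
    nlinarith [h5, hd]
  nlinarith [norm_nonneg (F x), norm_nonneg x, mul_nonneg hc.le (norm_nonneg x), h4]

lemma im_eq_zero_aux [Nontrivial B] (ψ : B →L[ℂ] ℂ) {c : ℝ} (hc : 0 < c)
    (h1 : ψ 1 = (c : ℂ)) (hb : ∀ y, ‖ψ y‖ ≤ c * ‖y‖) {a : B} (ha : IsSelfAdjoint a) :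
    (ψ a).im = 0 := by
  set z := ψ a with hz
  have key : ∀ t : ℝ, c^2 - 2*c*t*z.im + t^2 * Complex.normSq z ≤ c^2 * (1 + t^2 * ‖a‖^2) := by
    intro t
    set y : B := 1 + ((t : ℂ) * Complex.I) • a with hy
    have expand : ∀ (u : ℂ) (x : B), (1 + (-u) • x) * (1 + u • x) = 1 + (-(u*u)) • (x*x) := by
      intro u x
      rw [add_mul, mul_add, mul_add, smul_mul_smul_comm, one_mul, one_mul, mul_one,
        neg_smul, neg_mul, neg_smul]
      abel1
    have hsy : star y * y = 1 + ((t : ℂ)^2) • (a * a) := by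
      have hst : star ((t:ℂ) * Complex.I) = -((t:ℂ) * Complex.I) := by
        simp [Complex.ext_iff]
      have h0 : star y * y = (1 + (-((t:ℂ) * Complex.I)) • a) * (1 + ((t:ℂ) * Complex.I) • a) := by
        rw [hy, star_add, star_smul, star_one, ha.star_eq, hst]
      rw [h0, expand]
      congr 1
      rw [mul_mul_mul_comm, Complex.I_mul_I]
      ring
    have hny : ‖y‖^2 ≤ 1 + t^2 * ‖a‖^2 := by
      have hyy : ‖y‖^2 = ‖star y * y‖ := by
        rw [CStarRing.norm_star_mul_self]; ring
      rw [hyy, hsy]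
      calc ‖(1 : B) + ((t:ℂ)^2) • (a * a)‖ ≤ ‖(1:B)‖ + ‖((t:ℂ)^2) • (a * a)‖ := norm_add_le _ _
        _ ≤ 1 + t^2 * ‖a‖^2 := by
            rw [norm_one, norm_smul, norm_pow, Complex.norm_real, Real.norm_eq_abs]
            have h3 := norm_mul_le a a
            nlinarith [sq_abs t, abs_nonneg t, norm_nonneg a, norm_nonneg (a*a)]
    have hψy : ψ y = (c : ℂ) + ((t:ℂ) * Complex.I) * z := by
      rw [hy, map_add, map_smul, h1, smul_eq_mul]
    have hψb := hb y
    have hsq : ‖ψ y‖^2 ≤ c^2 * ‖y‖^2 := by nlinarith [norm_nonneg y, norm_nonneg (ψ y), hψb]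
    have hval : ‖ψ y‖^2 = c^2 - 2*c*t*z.im + t^2 * Complex.normSq z := by
      rw [hψy]
      have habs2 : ∀ u : ℂ, ‖u‖^2 = Complex.normSq u := fun u => by
        rw [Complex.sq_norm]
      rw [habs2]
      simp [Complex.normSq_apply, Complex.add_re, Complex.add_im, Complex.mul_re, Complex.mul_im]
      ring
    nlinarith [sq_nonneg ‖y‖, norm_nonneg y, mul_le_mul_of_nonneg_left hny (sq_nonneg c)]
  set K := c^2 * ‖a‖^2 with hK
  have hK0 : 0 ≤ K := by positivity
  set B' := 2*c*z.im with hB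
  have habs : ∀ t : ℝ, - B' * t ≤ K * t^2 := by
    intro t
    have hkt := key t
    have hns : 0 ≤ Complex.normSq z := Complex.normSq_nonneg z
    rw [hB, hK]
    nlinarith [mul_nonneg (sq_nonneg t) hns]
  have hB0 : B' = 0 := by
    have hKp : (0:ℝ) < K + 1 := by linarith
    set q : ℝ := B' / (K+1) with hqdef
    have hq : B' = q * (K+1) := (div_mul_cancel₀ _ hKp.ne').symm
    have h1' := habs (-q)
    have hq' : B' * q = q^2 * (K+1) := by rw [hq]; ring
    have hq2 : q^2 ≤ 0 := by nlinarith [h1', hq']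
    have hq0 : q = 0 := by
      have : q^2 = 0 := le_antisymm hq2 (sq_nonneg q)
      exact pow_eq_zero_iff (by norm_num) |>.mp this
    rw [hq, hq0, zero_mul]
  have h2c : (2*c) ≠ 0 := by positivity
  rcases mul_eq_zero.mp hB0 with h | h
  · exact absurd h h2c
  · exact h

/-- Positivity criterion: a functional of norm `c` attaining `c` at `1` is positive. -/
lemma pos_aux [Nontrivial B] (ψ : B →L[ℂ] ℂ) {c : ℝ} (hc : 0 < c)
    (h1 : ψ 1 = (c : ℂ)) (hb : ∀ y, ‖ψ y‖ ≤ c * ‖y‖) (x : B) : 0 ≤ ψ (star x * x) := by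
  set a := star x * x with hadef
  have ha : IsSelfAdjoint a := IsSelfAdjoint.star_mul_self x
  have him := im_eq_zero_aux ψ hc h1 hb ha
  set m := ‖a‖ with hm
  have hm0 : 0 ≤ m := norm_nonneg a
  have hcfc : a - (m : ℝ) • (1:B) = cfc (fun t : ℝ => t - m) a := by
    rw [cfc_sub _ _ a (by fun_prop) (by fun_prop), cfc_id' ℝ a, cfc_const m a,
      Algebra.algebraMap_eq_smul_one]
  have hnorm : ‖a - (m:ℝ) • (1:B)‖ ≤ m := by
    rw [hcfc]
    apply norm_cfc_le hm0
    intro t ht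
    have h0 : 0 ≤ t := spectrum_star_mul_self_nonneg t (hadef ▸ ht)
    have h1' : t ≤ m := le_trans (le_abs_self t)
      (by simpa [Real.norm_eq_abs] using spectrum.norm_le_norm_of_mem ht)
    rw [Real.norm_eq_abs]
    exact abs_le.mpr ⟨by linarith, by linarith⟩
  have hψ : ψ (a - (m:ℝ) • (1:B)) = ψ a - ((c*m : ℝ) : ℂ) := by
    rw [map_sub, ← Complex.coe_smul, map_smul, h1, smul_eq_mul]
    push_cast
    ring
  have hbnd := hb (a - (m:ℝ) • (1:B))
  rw [hψ] at hbnd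
  have hbnd2 : ‖ψ a - ((c*m : ℝ) : ℂ)‖ ≤ c * m := le_trans hbnd
    (by nlinarith [hc.le, hm0, hnorm])
  have hre : 0 ≤ (ψ a).re := by
    have h2 : ‖ψ a - ((c*m:ℝ):ℂ)‖^2 = ((ψ a).re - c*m)^2 + (ψ a).im^2 := by
      rw [Complex.sq_norm, Complex.normSq_apply]
      simp [Complex.sub_re, Complex.sub_im]
      ring
    nlinarith [norm_nonneg (ψ a - ((c*m:ℝ):ℂ)), hbnd2, sq_nonneg (ψ a).im]
  rw [Complex.le_def]
  simpa using ⟨hre, him.symm⟩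

end CutoffAux

section EigenAux

variable {A : Type*} [NormedRing A] [StarRing A] [CStarRing A] [CompleteSpace A]
  [NormedAlgebra ℂ A] [StarModule ℂ A]

lemma normSet.mul {D : StarSubalgebra ℂ A} {v w : A} (hv : v ∈ normSet D)
    (hw : w ∈ normSet D) : v * w ∈ normSet D := by
  constructor
  · intro d hd
    have heq : star (v*w) * d * (v*w) = star w * (star v * d * v) * w := by
      simp [star_mul, mul_assoc]
    rw [heq]
    exact hw.1 _ (hv.1 d hd)
  · intro d hd
    have heq : (v*w) * d * star (v*w) = v * (w * d * star w) * star v := by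
      simp [star_mul, mul_assoc]
    rw [heq]
    exact hv.2 _ (hw.2 d hd)

lemma algHom_congr {D : StarSubalgebra ℂ A} (s : ↥D →ₐ[ℂ] ℂ) {x y : A}
    (hx : x ∈ D) (hy : y ∈ D) (h : x = y) : s ⟨x, hx⟩ = s ⟨y, hy⟩ := by subst h; rfl

lemma algHom_mul {D : StarSubalgebra ℂ A} (s : ↥D →ₐ[ℂ] ℂ) {x y : A}
    (hx : x ∈ D) (hy : y ∈ D) (hxy : x * y ∈ D) :
    s ⟨x*y, hxy⟩ = s ⟨x, hx⟩ * s ⟨y, hy⟩ := by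
  have h : (⟨x*y, hxy⟩ : ↥D) = ⟨x, hx⟩ * ⟨y, hy⟩ := Subtype.ext rfl
  rw [h, map_mul]

lemma eig_left {D : StarSubalgebra ℂ A} {φ : A →L[ℂ] ℂ} {r s : ↥D →ₐ[ℂ] ℂ}
    (hφe : IsEigen D φ r s) {d : A} (hd : d ∈ D) (x : A) :
    φ (d * x) = r ⟨d, hd⟩ * φ x := by
  simpa using hφe.2 ⟨d, hd⟩ 1 x

lemma eig_right {D : StarSubalgebra ℂ A} {φ : A →L[ℂ] ℂ} {r s : ↥D →ₐ[ℂ] ℂ}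
    (hφe : IsEigen D φ r s) {d : A} (hd : d ∈ D) (x : A) :
    φ (x * d) = φ x * s ⟨d, hd⟩ := by
  simpa using hφe.2 1 ⟨d, hd⟩ x

end EigenAux

/-- for a norm-one compatible eigenfunctional `φ` with `φ(v) > 0`
(`v` a normalizer), the states `f(x) = φ(vx)/φ(v)` and `g(x) = φ(xv)/φ(v)` are compatible
states. -/
theorem stmt18 (D : StarSubalgebra ℂ A) (hreg : IsRegularIncl D)
    (φ : A →L[ℂ] ℂ) (r s : ↥D →ₐ[ℂ] ℂ) (hφ : IsCompatEigen D φ r s) (hn : ‖φ‖ = 1)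
    (v : A) (hv : v ∈ normSet D) (hpos : 0 < φ v) :
    (let f : A → ℂ := fun x => φ (v * x) / φ v
     let g : A → ℂ := fun x => φ (x * v) / φ v
     (f 1 = 1 ∧ ∀ x : A, 0 ≤ f (star x * x)) ∧
     (g 1 = 1 ∧ ∀ x : A, 0 ≤ g (star x * x)) ∧
     (∀ w ∈ normSet D, f w = 0 ∨ (Complex.normSq (f w) : ℂ) = f (star w * w)) ∧
     (∀ w ∈ normSet D, g w = 0 ∨ (Complex.normSq (g w) : ℂ) = g (star w * w))) := by
  intro f g
  have hφe := hφ.1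
  have hφc := hφ.2
  have habel : IsAbelian D := hreg.1.1
  have hvne : φ v ≠ 0 := by
    intro h; rw [h] at hpos; exact lt_irrefl 0 hpos
  have hnontriv : Nontrivial A := by
    refine ⟨⟨v, 0, fun h => hvne ?_⟩⟩
    rw [h, map_zero]
  letI : CStarAlgebra A := { }
  set c : ℝ := (φ v).re with hcdef
  have hlt := hpos
  rw [Complex.lt_def] at hlt
  have hc : 0 < c := by simpa [hcdef] using hlt.1
  have him0 : (φ v).im = 0 := by simpa using hlt.2.symm
  have hφv : φ v = (c : ℂ) := by
    apply Complex.ext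
    · simp [hcdef]
    · simp [him0]
  have hcC : ((c : ℝ) : ℂ) ≠ 0 := by
    simpa using hc.ne'
  have hsvvmem : star v * v ∈ D := normSet.star_mul_self_mem hv
  have hvvsmem : v * star v ∈ D := normSet.mul_star_self_mem hv
  have hsvv : s ⟨star v * v, hsvvmem⟩ = ((c^2 : ℝ) : ℂ) := by
    rcases hφc v hv with h | h
    · exact absurd h hvne
    · rw [← h, hφv, Complex.normSq_ofReal]
      norm_cast
      ring
  -- r(u u*) = s(u* u) when φ u ≠ 0
  have hr_uu : ∀ (u : A) (hu : u ∈ normSet D), φ u ≠ 0 →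
      r ⟨u * star u, normSet.mul_star_self_mem hu⟩
        = s ⟨star u * u, normSet.star_mul_self_mem hu⟩ := by
    intro u hu hune
    have h1 : φ ((u * star u) * u) = r ⟨u * star u, normSet.mul_star_self_mem hu⟩ * φ u :=
      eig_left hφe (normSet.mul_star_self_mem hu) u
    have h2 : φ (u * (star u * u)) = φ u * s ⟨star u * u, normSet.star_mul_self_mem hu⟩ :=
      eig_right hφe (normSet.star_mul_self_mem hu) u
    rw [mul_assoc] at h1
    have h3 : r ⟨u * star u, normSet.mul_star_self_mem hu⟩ * φ u
        = s ⟨star u * u, normSet.star_mul_self_mem hu⟩ * φ u := by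
      rw [← h1, h2, mul_comm]
    exact mul_right_cancel₀ hune h3
  -- the conjugation identity s(u* h u) = s(u* u) r(h) when φ u ≠ 0
  have hI : ∀ (u : A) (hu : u ∈ normSet D), φ u ≠ 0 → ∀ (h : A) (hh : h ∈ D),
      s ⟨star u * h * u, hu.1 h hh⟩
        = s ⟨star u * u, normSet.star_mul_self_mem hu⟩ * r ⟨h, hh⟩ := by
    intro u hu hune h hh
    have hm1 : u * star u ∈ D := normSet.mul_star_self_mem hu
    have hm2 : u * star u * h ∈ D := mul_mem hm1 hh
    have e1 : φ ((u * star u * h) * u) = r ⟨u * star u * h, hm2⟩ * φ u :=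
      eig_left hφe hm2 u
    have e2 : φ (u * (star u * h * u)) = φ u * s ⟨star u * h * u, hu.1 h hh⟩ :=
      eig_right hφe (hu.1 h hh) u
    have e3 : (u * star u * h) * u = u * (star u * h * u) := by
      simp [mul_assoc]
    rw [e3, e2] at e1
    have e4 : r ⟨u * star u * h, hm2⟩ = r ⟨u * star u, hm1⟩ * r ⟨h, hh⟩ :=
      algHom_mul r hm1 hh hm2
    rw [e4, hr_uu u hu hune] at e1
    have e5 : s ⟨star u * h * u, hu.1 h hh⟩ * φ u
        = (s ⟨star u * u, normSet.star_mul_self_mem hu⟩ * r ⟨h, hh⟩) * φ u := by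
      rw [← e1, mul_comm]
    exact mul_right_cancel₀ hune e5
  -- multiplicativity identity for conjugated characters
  have hmult : ∀ (w : A) (hw : w ∈ normSet D) (d : A) (hd : d ∈ D),
      s ⟨star w * d * w, hw.1 d hd⟩ * s ⟨star w * d * w, hw.1 d hd⟩
        = s ⟨star w * (d * d) * w, hw.1 _ (mul_mem hd hd)⟩
          * s ⟨star w * w, normSet.star_mul_self_mem hw⟩ := by
    intro w hw d hd
    have hcm : (w * star w) * d = d * (w * star w) :=
      habel (w * star w) (normSet.mul_star_self_mem hw) d hd
    have helt : (star w * d * w) * (star w * d * w)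
        = (star w * (d * d) * w) * (star w * w) := by
      calc (star w * d * w) * (star w * d * w)
          = star w * (d * (((w * star w) * d) * w)) := by simp [mul_assoc]
        _ = star w * (d * ((d * (w * star w)) * w)) := by rw [hcm]
        _ = (star w * (d * d) * w) * (star w * w) := by simp [mul_assoc]
    have h1 := algHom_mul s (hw.1 d hd) (hw.1 d hd) (mul_mem (hw.1 d hd) (hw.1 d hd))
    have h2 := algHom_mul s (hw.1 _ (mul_mem hd hd)) (normSet.star_mul_self_mem hw)
      (mul_mem (hw.1 _ (mul_mem hd hd)) (normSet.star_mul_self_mem hw))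
    rw [← h1, ← h2]
    exact algHom_congr s _ _ helt
  have hre : r ⟨v * star v, hvvsmem⟩ = ((c^2 : ℝ) : ℂ) := by
    rw [hr_uu v hv hvne]; exact hsvv
  -- membership and character values for the cutoff elements
  have hbmem : ∀ (e : A), e ∈ D → ∀ t₀ : ℝ, bbElt e t₀ ∈ D := by
    intro e he t₀
    rw [bb_complex]
    exact sub_mem (one_mem D) (SMulMemClass.smul_mem _ (pow_mem (sub_mem he
      (SMulMemClass.smul_mem _ (one_mem D))) 2))
  have hχbb : ∀ (χ : ↥D →ₐ[ℂ] ℂ) (e : A) (he : e ∈ D) (t₀ : ℝ),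
      χ ⟨e, he⟩ = ((t₀ : ℝ) : ℂ) → ∀ (n : ℕ) (hm : (bbElt e t₀)^n ∈ D),
      χ ⟨(bbElt e t₀)^n, hm⟩ = 1 := by
    intro χ e he t₀ hχe n hm
    have h1 : (⟨(bbElt e t₀)^n, hm⟩ : ↥D) = (⟨bbElt e t₀, hbmem e he t₀⟩ : ↥D)^n :=
      Subtype.ext (by simp)
    have h2 : (⟨bbElt e t₀, hbmem e he t₀⟩ : ↥D)
        = 1 - algebraMap ℂ ↥D ((((‖e‖ + t₀)^2)⁻¹ : ℝ) : ℂ)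
            * ((⟨e, he⟩ : ↥D) - algebraMap ℂ ↥D ((t₀ : ℝ) : ℂ))^2 :=
      Subtype.ext (by simp [bb_complex, Algebra.algebraMap_eq_smul_one])
    rw [h1, map_pow, h2, map_sub, map_one, map_mul, AlgHom.commutes, map_pow, map_sub,
      AlgHom.commutes, hχe]
    simp
  -- norm bound, left version
  have hbound_f : ∀ x : A, ‖φ (v * x)‖ ≤ c * ‖x‖ := by
    have hesa : IsSelfAdjoint (v * star v) := IsSelfAdjoint.mul_star_self v
    intro x
    refine bound_aux hesa hc (fun x => φ (v * x))
      (fun n => (bbElt (v * star v) (c^2))^n * v) ?_ ?_ x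
    · intro n
      have hsb : IsSelfAdjoint ((bbElt (v * star v) (c^2))^n) :=
        (bb_isSelfAdjoint hesa _).pow n
      have h1 : ((bbElt (v * star v) (c^2))^n * v) * star ((bbElt (v * star v) (c^2))^n * v)
          = (bbElt (v * star v) (c^2))^n * (v * star v) * (bbElt (v * star v) (c^2))^n := by
        rw [star_mul, hsb.star_eq]
        simp [mul_assoc]
      rw [← h1, CStarRing.norm_self_mul_star, sq]
    · intro n x'
      have hmn : (bbElt (v * star v) (c^2))^n ∈ D := pow_mem (hbmem _ hvvsmem _) n
      have h2 : φ (v * x') = φ ((bbElt (v * star v) (c^2))^n * (v * x')) := by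
        rw [eig_left hφe hmn (v * x'), hχbb r _ hvvsmem (c^2) hre n hmn, one_mul]
      show ‖φ (v * x')‖ ≤ _
      rw [h2]
      calc ‖φ ((bbElt (v * star v) (c^2))^n * (v * x'))‖
          ≤ ‖φ‖ * ‖(bbElt (v * star v) (c^2))^n * (v * x')‖ := φ.le_opNorm _
        _ = ‖(bbElt (v * star v) (c^2))^n * (v * x')‖ := by rw [hn, one_mul]
        _ ≤ ‖(bbElt (v * star v) (c^2))^n * v‖ * ‖x'‖ := by
            rw [← mul_assoc]; exact norm_mul_le _ _
  -- norm bound, right version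
  have hbound_g : ∀ x : A, ‖φ (x * v)‖ ≤ c * ‖x‖ := by
    have hesa : IsSelfAdjoint (star v * v) := IsSelfAdjoint.star_mul_self v
    intro x
    refine bound_aux hesa hc (fun x => φ (x * v))
      (fun n => v * (bbElt (star v * v) (c^2))^n) ?_ ?_ x
    · intro n
      have hsb : IsSelfAdjoint ((bbElt (star v * v) (c^2))^n) :=
        (bb_isSelfAdjoint hesa _).pow n
      have h1 : star (v * (bbElt (star v * v) (c^2))^n) * (v * (bbElt (star v * v) (c^2))^n)
          = (bbElt (star v * v) (c^2))^n * (star v * v) * (bbElt (star v * v) (c^2))^n := by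
        rw [star_mul, hsb.star_eq]
        simp [mul_assoc]
      rw [← h1, CStarRing.norm_star_mul_self, sq]
    · intro n x'
      have hmn : (bbElt (star v * v) (c^2))^n ∈ D := pow_mem (hbmem _ hsvvmem _) n
      have h2 : φ (x' * v) = φ ((x' * v) * (bbElt (star v * v) (c^2))^n) := by
        rw [eig_right hφe hmn (x' * v), hχbb s _ hsvvmem (c^2) hsvv n hmn, mul_one]
      show ‖φ (x' * v)‖ ≤ _
      rw [h2]
      calc ‖φ ((x' * v) * (bbElt (star v * v) (c^2))^n)‖
          ≤ ‖φ‖ * ‖(x' * v) * (bbElt (star v * v) (c^2))^n‖ := φ.le_opNorm _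
        _ = ‖(x' * v) * (bbElt (star v * v) (c^2))^n‖ := by rw [hn, one_mul]
        _ ≤ ‖v * (bbElt (star v * v) (c^2))^n‖ * ‖x'‖ := by
            rw [mul_assoc, mul_comm ‖v * (bbElt (star v * v) (c^2))^n‖]
            exact norm_mul_le _ _
  -- positivity
  have hdiv_nonneg : ∀ z : ℂ, 0 ≤ z → 0 ≤ z / (c : ℂ) := by
    intro z hz
    rw [Complex.le_def] at hz
    have hz2 : z = ((z.re : ℝ) : ℂ) := by
      apply Complex.ext
      · rfl
      · simpa using hz.2.symm
    rw [hz2, ← Complex.ofReal_div]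
    rw [Complex.zero_le_real]
    apply div_nonneg _ hc.le
    simpa using hz.1
  have hf_pos : ∀ x : A, 0 ≤ φ (v * (star x * x)) / φ v := by
    intro x
    set ψ : A →L[ℂ] ℂ := φ.comp (ContinuousLinearMap.mul ℂ A v) with hψdef
    have hψapp : ∀ y, ψ y = φ (v * y) := fun y => rfl
    have h1 : ψ 1 = (c : ℂ) := by rw [hψapp, mul_one, hφv]
    have hzz := pos_aux ψ hc h1 (fun y => by rw [hψapp]; exact hbound_f y) x
    rw [hψapp] at hzz
    rw [hφv]
    exact hdiv_nonneg _ hzz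
  have hg_pos : ∀ x : A, 0 ≤ φ ((star x * x) * v) / φ v := by
    intro x
    set ψ : A →L[ℂ] ℂ := φ.comp ((ContinuousLinearMap.mul ℂ A).flip v) with hψdef
    have hψapp : ∀ y, ψ y = φ (y * v) := fun y => rfl
    have h1 : ψ 1 = (c : ℂ) := by rw [hψapp, one_mul, hφv]
    have hzz := pos_aux ψ hc h1 (fun y => by rw [hψapp]; exact hbound_g y) x
    rw [hψapp] at hzz
    rw [hφv]
    exact hdiv_nonneg _ hzz
  refine ⟨⟨?_, ?_⟩, ⟨?_, ?_⟩, ?_, ?_⟩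
  · show φ (v * 1) / φ v = 1
    rw [mul_one, div_self hvne]
  · intro x
    exact hf_pos x
  · show φ (1 * v) / φ v = 1
    rw [one_mul, div_self hvne]
  · intro x
    exact hg_pos x
  · -- compatibility of f
    intro w hw
    have huN : v * w ∈ normSet D := normSet.mul hv hw
    by_cases hu0 : φ (v * w) = 0
    · left
      show φ (v * w) / φ v = 0
      rw [hu0, zero_div]
    · right
      rcases hφc (v * w) huN with h | h
      · exact absurd h hu0
      have hE1mem : star w * (star v * v) * w ∈ D := hw.1 _ hsvvmem
      have hXval : s ⟨star (v*w) * (v*w), normSet.star_mul_self_mem huN⟩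
          = s ⟨star w * (star v * v) * w, hE1mem⟩ :=
        algHom_congr s _ _ (by simp [star_mul, mul_assoc])
      set X := s ⟨star w * (star v * v) * w, hE1mem⟩ with hXdef
      have hXeq : ((Complex.normSq (φ (v*w)) : ℝ) : ℂ) = X := by rw [h, hXval]
      have hXne : X ≠ 0 := by
        rw [← hXeq]
        simp only [ne_eq, Complex.ofReal_eq_zero, Complex.normSq_eq_zero]
        exact hu0
      have hIu := hI (v*w) huN hu0 (v * star v) hvvsmem
      have helt2 : star (v*w) * (v * star v) * (v*w)
          = star w * ((star v * v) * (star v * v)) * w := by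
        simp [star_mul, mul_assoc]
      have hE2 : s ⟨star w * ((star v * v) * (star v * v)) * w, hw.1 _ (mul_mem hsvvmem hsvvmem)⟩
          = X * ((c^2 : ℝ) : ℂ) := by
        rw [algHom_congr s _ (huN.1 _ hvvsmem) helt2.symm, hIu, hXval, hre]
      have hmul := hmult w hw (star v * v) hsvvmem
      rw [hE2] at hmul
      set Y := s ⟨star w * w, normSet.star_mul_self_mem hw⟩ with hYdef
      have hXY : X = ((c^2 : ℝ) : ℂ) * Y := by
        apply mul_left_cancel₀ hXne
        rw [hmul]; ring
      show ((Complex.normSq (φ (v * w) / φ v) : ℝ) : ℂ) = φ (v * (star w * w)) / φ v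
      have hfww : φ (v * (star w * w)) = φ v * Y :=
        eig_right hφe (normSet.star_mul_self_mem hw) v
      rw [hfww, hφv, mul_div_cancel_left₀ _ hcC]
      have hnq : Complex.normSq (φ (v * w) / (c : ℂ))
          = Complex.normSq (φ (v * w)) / (c * c) := by
        rw [map_div₀, Complex.normSq_ofReal]
      rw [hnq, Complex.ofReal_div, hXeq, hXY]
      have hcc : ((c * c : ℝ) : ℂ) = ((c^2 : ℝ) : ℂ) := by norm_cast; ring
      rw [hcc, mul_comm, mul_div_assoc, div_self (by simpa using pow_ne_zero 2 hcC), mul_one]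
  · -- compatibility of g
    intro w hw
    have huN : w * v ∈ normSet D := normSet.mul hw hv
    by_cases hu0 : φ (w * v) = 0
    · left
      show φ (w * v) / φ v = 0
      rw [hu0, zero_div]
    · right
      rcases hφc (w * v) huN with h | h
      · exact absurd h hu0
      have hwwmem : star w * w ∈ D := normSet.star_mul_self_mem hw
      have helt : star (w*v) * (w*v) = star v * (star w * w) * v := by
        simp [star_mul, mul_assoc]
      have hIv := hI v hv hvne (star w * w) hwwmem
      set R := r ⟨star w * w, hwwmem⟩ with hRdef
      have hXeq : ((Complex.normSq (φ (w*v)) : ℝ) : ℂ) = ((c^2 : ℝ) : ℂ) * R := by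
        rw [h, algHom_congr s _ (hv.1 _ hwwmem) helt, hIv, hsvv]
      show ((Complex.normSq (φ (w * v) / φ v) : ℝ) : ℂ) = φ ((star w * w) * v) / φ v
      have hgww : φ ((star w * w) * v) = R * φ v := eig_left hφe hwwmem v
      rw [hgww, hφv, mul_div_cancel_right₀ _ hcC]
      have hnq : Complex.normSq (φ (w * v) / (c : ℂ))
          = Complex.normSq (φ (w * v)) / (c * c) := by
        rw [map_div₀, Complex.normSq_ofReal]
      rw [hnq, Complex.ofReal_div, hXeq]
      have hcc : ((c * c : ℝ) : ℂ) = ((c^2 : ℝ) : ℂ) := by norm_cast; ring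
      rw [hcc, mul_comm, mul_div_assoc, div_self (by simpa using pow_ne_zero 2 hcC), mul_one]

end RegularInclusion
end
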